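/- arXiv:2411.08369 — 5 statements merged into one kernel-verified Lean document; each statement's English description precedes it below -/
import Mathlib

section
/- Let X be a Banach space, σ a Hausdorff locally convex topology on X for which the norm is lower semicontinuous, and (D_n) a bounded sequence in X with D_n → 0 in σ. Then for every finite-dimensional subspace Y ⊆ X, liminf_n dist(D_n, Y) ≥ (inf_n ‖D_n‖)/2. -/
open Filter

/-- Let `X` be a Banach space, `t` a Hausdorff locally convex vector topology on `X` for
which the norm is lower semicontinuous, and `(D n)` a bounded sequence with `D n → 0`
in `t`. Then for every finite-dimensional subspace `Y ⊆ X`,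
`liminf_n dist (D n) Y ≥ (⨅ n, ‖D n‖) / 2`. -/
theorem liminf_infDist_ge_of_lsc_topology
    {X : Type*} [NormedAddCommGroup X] [NormedSpace ℝ X] [CompleteSpace X]
    (t : TopologicalSpace X)
    (ht2 : @T2Space X t)
    (htg : @IsTopologicalAddGroup X t _)
    (hsm : @ContinuousSMul ℝ X _ _ t)
    (hlc : @LocallyConvexSpace ℝ X _ _ _ _ t)
    (hlsc : @LowerSemicontinuous X ℝ t _ (fun x => ‖x‖))
    (D : ℕ → X) (hbdd : ∃ C : ℝ, ∀ n, ‖D n‖ ≤ C)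
    (hconv : Filter.Tendsto D atTop (@nhds X t 0))
    (Y : Submodule ℝ X) (hY : FiniteDimensional ℝ Y) :
    (⨅ n, ‖D n‖) / 2 ≤ atTop.liminf (fun n => Metric.infDist (D n) (Y : Set X)) := by
  classical
  haveI := hY
  obtain ⟨C, hC⟩ := hbdd
  set f : ℕ → ℝ := fun n => Metric.infDist (D n) (Y : Set X) with hfdef
  set L : ℝ := atTop.liminf f with hLdef
  set m : ℝ := ⨅ n, ‖D n‖ with hmdef
  have hmle : ∀ n, m ≤ ‖D n‖ := fun n =>
    ciInf_le ⟨0, by rintro _ ⟨n, rfl⟩; exact norm_nonneg _⟩ n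
  have hfnonneg : ∀ n, 0 ≤ f n := fun n => Metric.infDist_nonneg
  have hbdd_ge : IsBoundedUnder (· ≥ ·) atTop f :=
    isBoundedUnder_of ⟨0, fun n => hfnonneg n⟩
  have hbdd_le : IsBoundedUnder (· ≤ ·) atTop f := by
    refine isBoundedUnder_of ⟨C, fun n => ?_⟩
    calc f n ≤ dist (D n) 0 := Metric.infDist_le_dist_of_mem Y.zero_mem
      _ = ‖D n‖ := by rw [dist_zero_right]
      _ ≤ C := hC n
  -- the continuous inclusion of Y into (X, t)
  let tYn : TopologicalSpace Y := @UniformSpace.toTopologicalSpace Y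
    (@PseudoMetricSpace.toUniformSpace Y (@SeminormedAddCommGroup.toPseudoMetricSpace Y
      (@NormedAddCommGroup.toSeminormedAddCommGroup Y _)))
  have htopY : @IsTopologicalAddGroup Y tYn _ := by exact inferInstance
  have hsmY : @ContinuousSMul ℝ Y _ _ tYn := by exact inferInstance
  have ht2Y : @T2Space Y tYn := by exact inferInstance
  have hcont := @LinearMap.continuous_of_finiteDimensional ℝ _ Y _ _ tYn htopY hsmY
      X _ _ t htg hsm _ ht2Y _ (Y.subtype)
  haveI := ht2
  haveI := htg
  haveI := hsm
  have key : ∀ ε : ℝ, 0 < ε → m ≤ 2 * L + 4 * ε := by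
    intro ε hε
    have hfreq : ∃ᶠ n in atTop, f n < L + ε :=
      frequently_lt_of_liminf_lt hbdd_le.isCoboundedUnder_ge (by linarith)
    obtain ⟨φ, hφmono, hφlt⟩ := Filter.extraction_of_frequently_atTop hfreq
    -- choose near-optimal approximants in Y
    have hchoice : ∀ n, ∃ y : Y, dist (D n) (y : X) < f n + ε := by
      intro n
      have h1 : Metric.infDist (D n) (Y : Set X) < f n + ε := by
        have : f n < f n + ε := by linarith
        exact this
      rw [Metric.infDist_lt_iff ⟨0, Y.zero_mem⟩] at h1
      obtain ⟨y, hyY, hy⟩ := h1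
      exact ⟨⟨y, hyY⟩, hy⟩
    choose g hg using hchoice
    -- the approximants along the subsequence are bounded in Y
    have hgb : ∀ k, g (φ k) ∈ Metric.closedBall (0 : Y) (L + 2 * ε + C) := by
      intro k
      rw [Metric.mem_closedBall, dist_zero_right]
      have h1 : dist (D (φ k)) ((g (φ k) : X)) < f (φ k) + ε := hg (φ k)
      have h2 : f (φ k) < L + ε := hφlt k
      have h3 : ‖(g (φ k) : X)‖ - ‖D (φ k)‖ ≤ ‖(g (φ k) : X) - D (φ k)‖ :=
        norm_sub_norm_le _ _
      have h4 : ‖(g (φ k) : X) - D (φ k)‖ = dist (D (φ k)) ((g (φ k) : X)) := by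
        rw [dist_comm, dist_eq_norm]
      have h5 : ‖g (φ k)‖ = ‖(g (φ k) : X)‖ := rfl
      have h6 := hC (φ k)
      rw [h5]
      linarith [h3, h4 ▸ h3]
    -- extract a norm-convergent subsequence in Y
    obtain ⟨y, -, ψ, hψmono, hψtend⟩ :=
      tendsto_subseq_of_bounded (Metric.isBounded_closedBall
        (x := (0 : Y)) (r := L + 2 * ε + C)) hgb
    -- the sequence D(φ(ψ j)) - g(φ(ψ j)) tends to -y in t
    have hDt : Tendsto (fun j => D (φ (ψ j))) atTop (@nhds X t (0 : X)) :=
      hconv.comp ((hφmono.comp hψmono).tendsto_atTop)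
    have hψtend' : Tendsto (fun j => g (φ (ψ j))) atTop
        (@nhds Y tYn y) := by
      exact hψtend
    have hyt : Tendsto (fun j => ((g (φ (ψ j)) : X))) atTop (@nhds X t ((y : X))) :=
      (hcont.tendsto y).comp hψtend'
    have hzt : Tendsto (fun j => D (φ (ψ j)) - (g (φ (ψ j)) : X)) atTop
        (@nhds X t (0 - (y : X))) := hDt.sub hyt
    rw [zero_sub] at hzt
    -- norms of the differences are < L + 2ε
    have hzlt : ∀ j, ‖D (φ (ψ j)) - (g (φ (ψ j)) : X)‖ < L + 2 * ε := by
      intro j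
      have h1 : dist (D (φ (ψ j))) ((g (φ (ψ j)) : X)) < f (φ (ψ j)) + ε := hg _
      have h2 : f (φ (ψ j)) < L + ε := hφlt _
      rw [← dist_eq_norm]
      linarith
    -- lower semicontinuity gives ‖y‖ ≤ L + 2ε
    have hynorm : ‖(y : X)‖ ≤ L + 2 * ε := by
      by_contra h
      push_neg at h
      have h' : L + 2 * ε < ‖(-(y : X))‖ := by rwa [norm_neg]
      have hev := (hzt.eventually (hlsc (-(y : X)) (L + 2 * ε) h'))
      obtain ⟨j, hj⟩ := hev.exists
      exact absurd (hzlt j) (not_lt.mpr (le_of_lt hj))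
    -- pass to the limit in m ≤ (L + 2ε) + ‖g n‖
    have hnormt : Tendsto (fun j => ‖(g (φ (ψ j)) : X)‖) atTop (nhds ‖(y : X)‖) := by
      have h := hψtend.norm
      exact h
    have hmly : m ≤ (L + 2 * ε) + ‖(y : X)‖ := by
      refine ge_of_tendsto (tendsto_const_nhds.add hnormt) ?_
      filter_upwards with j
      have h1 : dist (D (φ (ψ j))) ((g (φ (ψ j)) : X)) < f (φ (ψ j)) + ε := hg _
      have h2 : f (φ (ψ j)) < L + ε := hφlt _
      have h3 : ‖D (φ (ψ j))‖ - ‖(g (φ (ψ j)) : X)‖ ≤ ‖D (φ (ψ j)) - (g (φ (ψ j)) : X)‖ :=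
        norm_sub_norm_le _ _
      have h4 : ‖D (φ (ψ j)) - (g (φ (ψ j)) : X)‖ = dist (D (φ (ψ j))) ((g (φ (ψ j)) : X)) :=
        (dist_eq_norm _ _).symm
      have h5 := hmle (φ (ψ j))
      linarith [h4 ▸ h3]
    linarith
  have hm2L : m ≤ 2 * L := by
    refine le_of_forall_pos_le_add ?_
    intro ε hε
    have := key (ε / 4) (by linarith)
    linarith
  linarith [hm2L]
end

section
/- Let X be a Banach space and (D_n) a bounded sequence in X converging to 0 in the weak topology σ(X, X*). Then for every finite-dimensional subspace Y ⊆ X, liminf_n dist(D_n, Y) ≥ (inf_n ‖D_n‖)/2. -/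
open Filter

/-- Let `X` be a Banach space and `(D n)` a bounded sequence converging weakly to `0`.
Then for every finite-dimensional subspace `Y ⊆ X`,
`liminf_n dist (D n) Y ≥ (⨅ n, ‖D n‖) / 2`. -/
theorem liminf_infDist_ge_of_weakly_null
    {X : Type*} [NormedAddCommGroup X] [NormedSpace ℝ X] [CompleteSpace X]
    (D : ℕ → X) (hbdd : ∃ C : ℝ, ∀ n, ‖D n‖ ≤ C)
    (hweak : ∀ φ : X →L[ℝ] ℝ, Filter.Tendsto (fun n => φ (D n)) atTop (nhds 0))
    (Y : Submodule ℝ X) (hY : FiniteDimensional ℝ Y) :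
    (⨅ n, ‖D n‖) / 2 ≤ atTop.liminf (fun n => Metric.infDist (D n) (Y : Set X)) := by
  haveI := hY
  obtain ⟨C, hC⟩ := hbdd
  set c : ℝ := ⨅ n, ‖D n‖ with hc
  have hbdd' : BddBelow (Set.range fun n => ‖D n‖) :=
    ⟨0, by rintro x ⟨n, rfl⟩; exact norm_nonneg _⟩
  have hcle : ∀ n, c ≤ ‖D n‖ := fun n => ciInf_le hbdd' n
  by_contra hcon
  push_neg at hcon
  set L := atTop.liminf (fun n => Metric.infDist (D n) (Y : Set X)) with hL
  set r : ℝ := (L + c / 2) / 2 with hr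
  have hLr : L < r := by
    rw [hr]; linarith
  have hrc : r < c / 2 := by
    rw [hr]; linarith
  have hbound : IsBoundedUnder (· ≤ ·) atTop (fun n => Metric.infDist (D n) (Y : Set X)) := by
    refine isBoundedUnder_of ⟨C, fun n => ?_⟩
    calc Metric.infDist (D n) (Y : Set X) ≤ dist (D n) 0 :=
          Metric.infDist_le_dist_of_mem Y.zero_mem
      _ = ‖D n‖ := by rw [dist_zero_right]
      _ ≤ C := hC n
  have hfreq : ∃ᶠ n in atTop, Metric.infDist (D n) (Y : Set X) < r :=
    frequently_lt_of_liminf_lt hbound.isCoboundedUnder_ge hLr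
  obtain ⟨φ, hφmono, hφ⟩ := extraction_of_frequently_atTop hfreq
  have hYne : (Y : Set X).Nonempty := ⟨0, Y.zero_mem⟩
  have hchoice : ∀ k, ∃ y ∈ (Y : Set X), dist (D (φ k)) y < r := fun k =>
    (Metric.infDist_lt_iff hYne).mp (hφ k)
  choose yk hykY hyk using hchoice
  set z : ℕ → Y := fun k => ⟨yk k, hykY k⟩ with hz
  have hzb : ∀ k, z k ∈ Metric.closedBall (0 : Y) (r + C) := by
    intro k
    rw [Metric.mem_closedBall, dist_zero_right]
    have h0 : ‖yk k‖ ≤ ‖D (φ k)‖ + ‖yk k - D (φ k)‖ := norm_le_insert' _ _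
    have h1 : ‖yk k - D (φ k)‖ < r := by
      rw [← dist_eq_norm, dist_comm]; exact hyk k
    have h2 := hC (φ k)
    calc ‖z k‖ = ‖yk k‖ := rfl
      _ ≤ r + C := by linarith
  obtain ⟨a, -, ψ, hψmono, hψtend⟩ :=
    tendsto_subseq_of_bounded Metric.isBounded_closedBall hzb
  have hcoe : Tendsto (fun j => (yk (ψ j) : X)) atTop (nhds (a : X)) :=
    (continuous_subtype_val.tendsto a).comp hψtend
  obtain ⟨g, hg1, hgy⟩ := exists_dual_vector'' ℝ (a : X)
  -- g (D (φ (ψ j))) → 0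
  have hcomp : StrictMono (φ ∘ ψ) := hφmono.comp hψmono
  have hDg : Tendsto (fun j => g (D (φ (ψ j)))) atTop (nhds 0) :=
    (hweak g).comp hcomp.tendsto_atTop
  have hgyk : Tendsto (fun j => g (yk (ψ j))) atTop (nhds (g (a : X))) :=
    (g.continuous.tendsto _).comp hcoe
  have hdiff : Tendsto (fun j => g (yk (ψ j)) - g (D (φ (ψ j)))) atTop (nhds (g (a : X))) := by
    simpa using hgyk.sub hDg
  have hgy' : g (a : X) = ‖(a : X)‖ := by exact_mod_cast hgy
  have hya : ‖(a : X)‖ ≤ r := by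
    rw [← hgy']
    refine le_of_tendsto hdiff (Eventually.of_forall fun j => ?_)
    have : g (yk (ψ j)) - g (D (φ (ψ j))) = g (yk (ψ j) - D (φ (ψ j))) := by
      rw [map_sub]
    rw [this]
    calc g (yk (ψ j) - D (φ (ψ j))) ≤ ‖g (yk (ψ j) - D (φ (ψ j)))‖ := le_abs_self _
      _ ≤ ‖g‖ * ‖yk (ψ j) - D (φ (ψ j))‖ := g.le_opNorm _
      _ ≤ 1 * ‖yk (ψ j) - D (φ (ψ j))‖ := by
          apply mul_le_mul_of_nonneg_right hg1 (norm_nonneg _)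
      _ = ‖yk (ψ j) - D (φ (ψ j))‖ := one_mul _
      _ ≤ r := by
          rw [← dist_eq_norm, dist_comm]; exact le_of_lt (hyk (ψ j))
  -- eventually yk (ψ j) close to a
  have hpos : (0 : ℝ) < c / 2 - r := by linarith
  have hev : ∀ᶠ j in atTop, dist ((yk (ψ j) : X)) (a : X) < c / 2 - r :=
    (Metric.tendsto_nhds.mp hcoe) _ hpos
  obtain ⟨j, hj⟩ := hev.exists
  have h1 : ‖D (φ (ψ j)) - yk (ψ j)‖ < r := by
    rw [← dist_eq_norm]; exact hyk (ψ j)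
  have h2 : ‖(yk (ψ j) : X) - (a : X)‖ < c / 2 - r := by
    rw [← dist_eq_norm]; exact hj
  have h3 : ‖D (φ (ψ j))‖ ≤ ‖D (φ (ψ j)) - yk (ψ j)‖ + ‖(yk (ψ j) : X) - (a : X)‖ + ‖(a : X)‖ := by
    have := norm_sub_le_norm_sub_add_norm_sub (D (φ (ψ j))) (yk (ψ j)) (a : X)
    have h4 : ‖D (φ (ψ j)) - (a:X)‖ ≤ ‖D (φ (ψ j)) - yk (ψ j)‖ + ‖(yk (ψ j) : X) - (a : X)‖ :=
      norm_sub_le_norm_sub_add_norm_sub _ _ _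
    have h5 : ‖D (φ (ψ j))‖ ≤ ‖(a:X)‖ + ‖D (φ (ψ j)) - (a:X)‖ := norm_le_insert' _ _
    linarith
  have := hcle (φ (ψ j))
  linarith
end

section
/- Let f : M → N be a Lipschitz map between metric spaces. If H¹(f∘γ(K)) = 0 for every bi-Lipschitz curve γ : K → M (K ⊆ ℝ compact), then H¹(f∘γ(K)) = 0 for every Lipschitz curve γ : K → M. -/
open MeasureTheory Filter Set Topology

/-- The 1-dimensional Hausdorff measure on a metric space (with the Borel σ-algebra). -/
noncomputable def H1 (P : Type*) [MetricSpace P] : @MeasureTheory.Measure P (borel P) :=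
  @MeasureTheory.Measure.hausdorffMeasure P _ (borel P) (@BorelSpace.mk P _ (borel P) rfl) 1

/-- A Lipschitz map `f : M → N` is curve-flat if for every compact `K ⊆ ℝ` and every
Lipschitz `γ : K → M`, the metric derivative of `f ∘ γ` vanishes Lebesgue-a.e. on `K`. -/
def CurveFlat {M N : Type*} [MetricSpace M] [MetricSpace N] (f : M → N) : Prop :=
  ∀ (K : Set ℝ), IsCompact K → ∀ (γ : ℝ → M) (C : NNReal), LipschitzOnWith C γ K →
    ∀ᵐ x ∂(volume.restrict K),
      Tendsto (fun y => dist (f (γ x)) (f (γ y)) / |x - y|) (nhdsWithin x (K \ {x})) (nhds 0)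

/-- A metric space is purely 1-unrectifiable if every Lipschitz image in it of a
subset of `ℝ` is `H¹`-null. -/
def PurelyOneUnrectifiable (P : Type*) [MetricSpace P] : Prop :=
  ∀ (A : Set ℝ) (γ : ℝ → P) (C : NNReal), LipschitzOnWith C γ A → H1 P (γ '' A) = 0

/-- `γ` is bi-Lipschitz on `K`: Lipschitz and with a Lipschitz inverse on its image. -/
def BiLipschitzOn {M : Type*} [MetricSpace M] (γ : ℝ → M) (K : Set ℝ) : Prop :=
  (∃ C : NNReal, LipschitzOnWith C γ K) ∧
  ∃ c : ℝ, 0 < c ∧ ∀ x ∈ K, ∀ y ∈ K, c * |x - y| ≤ dist (γ x) (γ y)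

open scoped NNReal ENNReal

lemma image_null_of_factor {N : Type*} [MetricSpace N] [MeasurableSpace N] [BorelSpace N]
    (s : Set ℝ) (g : ℝ → N) (ψ : ℝ → ℝ) (L : ℝ≥0)
    (hfac : ∀ a ∈ s, ∀ b ∈ s, dist (g a) (g b) ≤ L * dist (ψ a) (ψ b))
    (hnull : volume (ψ '' s) = 0) : μH[1] (g '' s) = 0 := by
  rcases s.eq_empty_or_nonempty with rfl | ⟨z₀, hz₀⟩
  · simp
  classical
  set h : ℝ → N := fun t => if ht : ∃ a, a ∈ s ∧ ψ a = t then g ht.choose else g z₀ with hhdef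
  have hspec : ∀ t (ht : ∃ a, a ∈ s ∧ ψ a = t),
      h t = g ht.choose ∧ ht.choose ∈ s ∧ ψ ht.choose = t := by
    intro t ht
    refine ⟨?_, ht.choose_spec⟩
    simp only [hhdef, dif_pos ht]
  have hhlip : LipschitzOnWith L h (ψ '' s) := by
    rw [lipschitzOnWith_iff_dist_le_mul]
    rintro t ⟨a, ha, rfl⟩ t' ⟨b, hb, rfl⟩
    obtain ⟨e1, m1, p1⟩ := hspec (ψ a) ⟨a, ha, rfl⟩
    obtain ⟨e2, m2, p2⟩ := hspec (ψ b) ⟨b, hb, rfl⟩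
    rw [e1, e2]
    calc dist (g _) (g _) ≤ L * dist (ψ _) (ψ _) := hfac _ m1 _ m2
      _ = L * dist (ψ a) (ψ b) := by rw [p1, p2]
  have hhim : g '' s ⊆ h '' (ψ '' s) := by
    rintro _ ⟨x, hx, rfl⟩
    refine ⟨ψ x, mem_image_of_mem _ hx, ?_⟩
    obtain ⟨e1, m1, p1⟩ := hspec (ψ x) ⟨x, hx, rfl⟩
    rw [e1]
    have : dist (g _) (g x) ≤ L * dist (ψ _) (ψ x) := hfac _ m1 _ hx
    rw [p1] at this
    simp only [dist_self, mul_zero] at this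
    exact dist_le_zero.1 this
  refine measure_mono_null hhim ?_
  have h1 := hhlip.hausdorffMeasure_image_le (zero_le_one (α := ℝ))
  have h2 : μH[(1:ℝ)] (ψ '' s) = 0 := by
    rw [show (μH[1] : Measure ℝ) = volume from hausdorffMeasure_real]
    exact hnull
  rw [h2, mul_zero] at h1
  exact le_antisymm h1 zero_le

lemma flat_part_null {N : Type*} [MetricSpace N] [MeasurableSpace N] [BorelSpace N]
    {K B : Set ℝ} (hK : IsCompact K) (hBm : MeasurableSet B) (hBK : B ⊆ K)
    (g : ℝ → N) (L : ℝ≥0) (hg : LipschitzOnWith L g K)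
    (hB : ∀ x ∈ B, ∀ ε : ℝ, 0 < ε →
      ∃ y ∈ K, y ≠ x ∧ |x - y| < ε ∧ dist (g x) (g y) ≤ ε * |x - y|) :
    μH[1] (g '' B) = 0 := by
  rcases B.eq_empty_or_nonempty with rfl | ⟨x₀, hx₀⟩
  · simp
  obtain ⟨R, hR⟩ : ∃ R : ℝ, K ⊆ Metric.closedBall 0 R := hK.isBounded.subset_closedBall 0
  have hRK : ∀ x ∈ K, -R ≤ x := by
    intro x hx
    have := hR hx
    rw [Metric.mem_closedBall, Real.dist_eq, sub_zero] at this
    linarith [(abs_le.1 this).1]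
  set c : ℝ := -R - 1 with hc
  have hcK : ∀ x ∈ K, c ≤ x := fun x hx => by have := hRK x hx; simp only [hc]; linarith
  have hc1 : ∀ x ∈ K, c ≤ x - 1 := fun x hx => by have := hRK x hx; simp only [hc]; linarith
  -- a dense sequence in the image
  obtain ⟨D, Dcount, hD⟩ := (hK.image_of_continuousOn hg.continuousOn).isSeparable
  have hDne : D.Nonempty := by
    rcases D.eq_empty_or_nonempty with rfl | h
    · exact absurd (hD ⟨x₀, hBK hx₀, rfl⟩) (by simp)
    · exact h
  obtain ⟨q, hq⟩ := Dcount.exists_eq_range hDne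
  have hDq : ∀ z ∈ g '' K, ∀ ε : ℝ, 0 < ε → ∃ i, dist z (q i) < ε := by
    intro z hz ε hε
    have := hD hz
    rw [hq] at this
    exact Metric.mem_closure_range_iff.1 this ε hε
  -- the Lipschitz extensions of the distance functions
  have hu : ∀ i : ℕ, LipschitzOnWith L (fun x => dist (g x) (q i)) K := by
    intro i
    have h1 : LipschitzWith 1 (fun z : N => dist z (q i)) := LipschitzWith.dist_left (q i)
    have := h1.comp_lipschitzOnWith hg
    rwa [one_mul] at this
  choose U hU1 hU2 using fun i => (hu i).extend_real
  have hUb : ∀ i (x y : ℝ), |U i x - U i y| ≤ L * |x - y| := by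
    intro i x y
    have := (hU1 i).dist_le_mul x y
    rwa [Real.dist_eq, Real.dist_eq] at this
  set φ : ℕ → ℝ → ℝ := fun i x => U i x + L * x with hφdef
  set φ' : ℕ → ℝ → ℝ := fun i x => -U i x + L * x with hφ'def
  have monφ : ∀ i, Monotone (φ i) := by
    intro i a b hab
    have h2 := abs_le.1 (hUb i a b)
    have h3 : |a - b| = b - a := by rw [abs_sub_comm]; exact abs_of_nonneg (by linarith)
    rw [h3] at h2
    simp only [hφdef]
    nlinarith [h2.1, h2.2]
  have monφ' : ∀ i, Monotone (φ' i) := by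
    intro i a b hab
    have h2 := abs_le.1 (hUb i a b)
    have h3 : |a - b| = b - a := by rw [abs_sub_comm]; exact abs_of_nonneg (by linarith)
    rw [h3] at h2
    simp only [hφ'def]
    nlinarith [h2.1, h2.2]
  have hcontU : ∀ i, Continuous (U i) := fun i => (hU1 i).continuous
  have hStφ : ∀ i (x : ℝ), (monφ i).stieltjesFunction x = φ i x := by
    intro i x
    rw [Monotone.stieltjesFunction_eq]
    apply rightLim_eq_of_tendsto
    have : Continuous (φ i) := by
      rw [hφdef]; exact (hcontU i).add (continuous_const.mul continuous_id)
    exact (this.tendsto x).mono_left nhdsWithin_le_nhds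
  have hStφ' : ∀ i (x : ℝ), (monφ' i).stieltjesFunction x = φ' i x := by
    intro i x
    rw [Monotone.stieltjesFunction_eq]
    apply rightLim_eq_of_tendsto
    have : Continuous (φ' i) := by
      rw [hφ'def]; exact (hcontU i).neg.add (continuous_const.mul continuous_id)
    exact (this.tendsto x).mono_left nhdsWithin_le_nhds
  set μi : ℕ → Measure ℝ := fun i => (monφ i).stieltjesFunction.measure with hμidef
  set νi : ℕ → Measure ℝ := fun i => (monφ' i).stieltjesFunction.measure with hνidef
  have hμIoc : ∀ i (a b : ℝ), μi i (Ioc a b) = ENNReal.ofReal (φ i b - φ i a) := by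
    intro i a b
    rw [hμidef]
    simp only [StieltjesFunction.measure_Ioc, hStφ]
  have hνIoc : ∀ i (a b : ℝ), νi i (Ioc a b) = ENNReal.ofReal (φ' i b - φ' i a) := by
    intro i a b
    rw [hνidef]
    simp only [StieltjesFunction.measure_Ioc, hStφ']
  -- the good subset B₁
  set B₁ : Set ℝ := B ∩ ⋂ i, ({x | (μi i).rnDeriv volume x = ENNReal.ofReal L} ∩
      {x | (νi i).rnDeriv volume x = ENNReal.ofReal L}) with hB₁def
  have hB₁B : B₁ ⊆ B := inter_subset_left
  have hB₁m : MeasurableSet B₁ := by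
    apply hBm.inter
    apply MeasurableSet.iInter
    intro i
    exact ((Measure.measurable_rnDeriv (μi i) volume) (measurableSet_singleton _)).inter
      ((Measure.measurable_rnDeriv (νi i) volume) (measurableSet_singleton _))
  have hmemB₁ : ∀ x ∈ B₁, ∀ i, (μi i).rnDeriv volume x = ENNReal.ofReal L ∧
      (νi i).rnDeriv volume x = ENNReal.ofReal L := by
    intro x hx i
    exact ⟨(mem_iInter.1 hx.2 i).1, (mem_iInter.1 hx.2 i).2⟩
  -- B is a.e. contained in B₁
  have hBB₁ : volume (B \ B₁) = 0 := by
    have h1 : ∀ᵐ x ∂(volume : Measure ℝ), ∀ i : ℕ,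
        HasDerivAt (φ i) (((μi i).rnDeriv volume x).toReal) x ∧
        HasDerivAt (φ' i) (((νi i).rnDeriv volume x).toReal) x ∧
        (μi i).rnDeriv volume x ≠ ⊤ ∧ (νi i).rnDeriv volume x ≠ ⊤ := by
      rw [ae_all_iff]
      intro i
      have e1 : μi i = (monφ i).stieltjesFunction.measure := by rw [hμidef]
      have e2 : νi i = (monφ' i).stieltjesFunction.measure := by rw [hνidef]
      rw [e1, e2]
      filter_upwards [(monφ i).ae_hasDerivAt, (monφ' i).ae_hasDerivAt,
        Measure.rnDeriv_lt_top ((monφ i).stieltjesFunction.measure) volume,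
        Measure.rnDeriv_lt_top ((monφ' i).stieltjesFunction.measure) volume] with x a1 a2 a3 a4
      exact ⟨a1, a2, a3.ne, a4.ne⟩
    have key : ∀ x ∈ B, (∀ i : ℕ,
        HasDerivAt (φ i) (((μi i).rnDeriv volume x).toReal) x ∧
        HasDerivAt (φ' i) (((νi i).rnDeriv volume x).toReal) x ∧
        (μi i).rnDeriv volume x ≠ ⊤ ∧ (νi i).rnDeriv volume x ≠ ⊤) → x ∈ B₁ := by
      intro x hx hprop
      have hseq : ∀ n : ℕ, ∃ y, y ∈ K ∧ y ≠ x ∧ |x - y| < 1/(n+1) ∧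
          dist (g x) (g y) ≤ (1/(n+1)) * |x - y| := by
        intro n
        obtain ⟨y, hyK, hyne, hlt, hd⟩ := hB x hx (1/(n+1)) (by positivity)
        exact ⟨y, hyK, hyne, hlt, hd⟩
      choose y hyK hyne hylt hyd using hseq
      have hyx : Tendsto y atTop (𝓝[≠] x) := by
        rw [tendsto_nhdsWithin_iff]
        constructor
        · rw [tendsto_iff_dist_tendsto_zero]
          apply squeeze_zero (fun n => dist_nonneg) (fun n => ?_)
            tendsto_one_div_add_atTop_nhds_zero_nat
          rw [Real.dist_eq, abs_sub_comm]
          exact (hylt n).le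
        · exact Eventually.of_forall fun n => hyne n
      have hUslope : ∀ i, Tendsto (fun n => slope (U i) x (y n)) atTop (𝓝 0) := by
        intro i
        apply squeeze_zero_norm (fun n => ?_) tendsto_one_div_add_atTop_nhds_zero_nat
        have hxK := hBK hx
        rw [slope_def_field, Real.norm_eq_abs, abs_div]
        have hpos : 0 < |y n - x| := abs_pos.2 (sub_ne_zero.2 (hyne n))
        rw [div_le_iff₀ hpos]
        have e1 : dist (g (y n)) (q i) = U i (y n) := hU2 i (hyK n)
        have e2 : dist (g x) (q i) = U i x := hU2 i hxK
        calc |U i (y n) - U i x| = |dist (g (y n)) (q i) - dist (g x) (q i)| := by rw [e1, e2]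
          _ ≤ dist (g (y n)) (g x) := abs_dist_sub_le _ _ _
          _ = dist (g x) (g (y n)) := dist_comm _ _
          _ ≤ (1/(n+1)) * |x - y n| := hyd n
          _ = 1/(n+1) * |y n - x| := by rw [abs_sub_comm]
      have hslopeφ : ∀ i n, slope (φ i) x (y n) = slope (U i) x (y n) + L := by
        intro i n
        rw [slope_def_field, slope_def_field, hφdef]
        have hne : y n - x ≠ 0 := sub_ne_zero.2 (hyne n)
        field_simp
        ring
      have hslopeφ' : ∀ i n, slope (φ' i) x (y n) = -slope (U i) x (y n) + L := by
        intro i n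
        rw [slope_def_field, slope_def_field, hφ'def]
        have hne : y n - x ≠ 0 := sub_ne_zero.2 (hyne n)
        field_simp
        ring
      rw [hB₁def]
      refine ⟨hx, mem_iInter.2 fun i => ⟨?_, ?_⟩⟩
      · have hlim1 : Tendsto (fun n => slope (φ i) x (y n)) atTop
            (𝓝 (((μi i).rnDeriv volume x).toReal)) :=
          (hasDerivAt_iff_tendsto_slope.1 (hprop i).1).comp hyx
        have hlim2 : Tendsto (fun n => slope (φ i) x (y n)) atTop (𝓝 (0 + L)) :=
          ((hUslope i).add tendsto_const_nhds).congr fun n => (hslopeφ i n).symm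
        have heq : ((μi i).rnDeriv volume x).toReal = (L : ℝ) := by
          have := tendsto_nhds_unique hlim1 hlim2
          rw [this, zero_add]
        show (μi i).rnDeriv volume x = ENNReal.ofReal L
        rw [← ENNReal.ofReal_toReal (hprop i).2.2.1, heq]
      · have hlim1 : Tendsto (fun n => slope (φ' i) x (y n)) atTop
            (𝓝 (((νi i).rnDeriv volume x).toReal)) :=
          (hasDerivAt_iff_tendsto_slope.1 (hprop i).2.1).comp hyx
        have hlim2 : Tendsto (fun n => slope (φ' i) x (y n)) atTop (𝓝 (-0 + L)) :=
          (((hUslope i).neg).add tendsto_const_nhds).congr fun n => (hslopeφ' i n).symm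
        have heq : ((νi i).rnDeriv volume x).toReal = (L : ℝ) := by
          have := tendsto_nhds_unique hlim1 hlim2
          rw [this, neg_zero, zero_add]
        show (νi i).rnDeriv volume x = ENNReal.ofReal L
        rw [← ENNReal.ofReal_toReal (hprop i).2.2.2, heq]
    have hsub : B \ B₁ ⊆ {x | ¬ ∀ i : ℕ,
        HasDerivAt (φ i) (((μi i).rnDeriv volume x).toReal) x ∧
        HasDerivAt (φ' i) (((νi i).rnDeriv volume x).toReal) x ∧
        (μi i).rnDeriv volume x ≠ ⊤ ∧ (νi i).rnDeriv volume x ≠ ⊤} := by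
      rintro x ⟨hxB, hxn⟩ hcon
      exact hxn (key x hxB hcon)
    exact measure_mono_null hsub (ae_iff.1 h1)
  have hfin : ∀ a b : ℝ, volume (Ioc a b ∩ B₁) ≠ ⊤ :=
    fun a b => (lt_of_le_of_lt (measure_mono inter_subset_left) measure_Ioc_lt_top).ne
  -- key two-sided estimate
  have habsU : ∀ (x y : ℝ), x ≤ y → ∀ i,
      |U i y - U i x| ≤ L * ((y - x) - (volume (Ioc x y ∩ B₁)).toReal) := by
    have hlow : ∀ (ρ : ℕ → Measure ℝ) (θ : ℕ → ℝ → ℝ), (∀ i, Monotone (θ i)) →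
        (∀ i (a b : ℝ), ρ i (Ioc a b) = ENNReal.ofReal (θ i b - θ i a)) →
        (∀ x ∈ B₁, ∀ i, (ρ i).rnDeriv volume x = ENNReal.ofReal L) →
        ∀ i (x y : ℝ), x ≤ y →
          (L:ℝ) * (volume (Ioc x y ∩ B₁)).toReal ≤ θ i y - θ i x := by
      intro ρ θ monθ hIoc hmemθ i x y hxy
      have hmeas : MeasurableSet (Ioc x y ∩ B₁) := measurableSet_Ioc.inter hB₁m
      have h1 : ∫⁻ z in Ioc x y ∩ B₁, (ρ i).rnDeriv volume z ∂volume
          = ENNReal.ofReal L * volume (Ioc x y ∩ B₁) := by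
        rw [setLIntegral_congr_fun hmeas (fun z hz => hmemθ z hz.2 i),
          setLIntegral_const]
      have h2 : ENNReal.ofReal L * volume (Ioc x y ∩ B₁) ≤ ρ i (Ioc x y) := by
        rw [← h1]
        exact le_trans (Measure.setLIntegral_rnDeriv_le _) (measure_mono inter_subset_left)
      have h4 : ENNReal.ofReal L * volume (Ioc x y ∩ B₁)
          = ENNReal.ofReal ((L:ℝ) * (volume (Ioc x y ∩ B₁)).toReal) := by
        rw [ENNReal.ofReal_mul L.coe_nonneg, ENNReal.ofReal_toReal (hfin x y)]
      rw [h4, hIoc i x y] at h2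
      exact (ENNReal.ofReal_le_ofReal_iff (sub_nonneg.2 (monθ i hxy))).1 h2
    intro x y hxy i
    have h1 := hlow μi φ monφ hμIoc (fun z hz i => (hmemB₁ z hz i).1) i x y hxy
    have h2 := hlow νi φ' monφ' hνIoc (fun z hz i => (hmemB₁ z hz i).2) i x y hxy
    rw [hφdef] at h1
    rw [hφ'def] at h2
    simp only at h1 h2
    rw [abs_le]
    constructor <;> nlinarith [h1, h2]
  -- the auxiliary monotone map ψ
  set ψ : ℝ → ℝ := fun t => t - (volume (Ioc c t ∩ B₁)).toReal with hψdef
  have hψdiff : ∀ x y : ℝ, c ≤ x → x ≤ y →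
      ψ y - ψ x = (y - x) - (volume (Ioc x y ∩ B₁)).toReal := by
    intro x y hcx hxy
    have hun : Ioc c y ∩ B₁ = (Ioc c x ∩ B₁) ∪ (Ioc x y ∩ B₁) := by
      rw [← union_inter_distrib_right, Ioc_union_Ioc_eq_Ioc hcx hxy]
    have hdisj : Disjoint (Ioc c x ∩ B₁) (Ioc x y ∩ B₁) :=
      (Ioc_disjoint_Ioc_of_le le_rfl).mono inter_subset_left inter_subset_left
    have hm := measure_union (μ := volume) hdisj (measurableSet_Ioc.inter hB₁m)
    rw [← hun] at hm
    simp only [hψdef]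
    rw [hm, ENNReal.toReal_add (hfin _ _) (hfin _ _)]
    ring
  have hψmono : ∀ x y : ℝ, x ≤ y → 0 ≤ ψ y - ψ x ∧ ψ y - ψ x ≤ y - x := by
    intro x y hxy
    have h1 : volume (Ioc c x ∩ B₁) ≤ volume (Ioc c y ∩ B₁) :=
      measure_mono (inter_subset_inter_left _ (Ioc_subset_Ioc_right hxy))
    have h1' : (volume (Ioc c x ∩ B₁)).toReal ≤ (volume (Ioc c y ∩ B₁)).toReal :=
      ENNReal.toReal_mono (hfin _ _) h1
    have h2 : volume (Ioc c y ∩ B₁) ≤ volume (Ioc c x ∩ B₁) + ENNReal.ofReal (y - x) := by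
      have hss : Ioc c y ∩ B₁ ⊆ (Ioc c x ∩ B₁) ∪ Ioc x y := by
        intro z hz
        rcases le_or_gt z x with h | h
        · exact Or.inl ⟨⟨hz.1.1, h⟩, hz.2⟩
        · exact Or.inr ⟨h, hz.1.2⟩
      refine le_trans (measure_mono hss) ((measure_union_le _ _).trans ?_)
      rw [Real.volume_Ioc]
    have h2' : (volume (Ioc c y ∩ B₁)).toReal ≤ (volume (Ioc c x ∩ B₁)).toReal + (y - x) := by
      have := ENNReal.toReal_mono
        (ENNReal.add_ne_top.2 ⟨hfin _ _, ENNReal.ofReal_ne_top⟩) h2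
      rwa [ENNReal.toReal_add (hfin _ _) ENNReal.ofReal_ne_top,
        ENNReal.toReal_ofReal (by linarith)] at this
    constructor <;> simp only [hψdef] <;> linarith
  -- the image factors through ψ
  have hgψ : ∀ x ∈ K, ∀ y ∈ K, x ≤ y → dist (g x) (g y) ≤ L * (ψ y - ψ x) := by
    intro x hxK y hyK hxy
    refine le_of_forall_pos_le_add fun ε hε => ?_
    obtain ⟨i, hi⟩ := hDq (g y) ⟨y, hyK, rfl⟩ (ε/2) (by linarith)
    have e1 : dist (g x) (q i) = U i x := hU2 i hxK
    have e2 : dist (g y) (q i) = U i y := hU2 i hyK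
    have h3 := habsU x y hxy i
    have h4 := hψdiff x y (hcK x hxK) hxy
    have h6 : |U i y - U i x| ≤ (L:ℝ) * (ψ y - ψ x) := by rw [h4]; exact h3
    have h7 := abs_le.1 h6
    have t := dist_triangle (g x) (q i) (g y)
    rw [dist_comm (q i) (g y)] at t
    linarith [h7.1]
  -- density points of B₁
  set B₂ : Set ℝ := {x ∈ B₁ | Tendsto
      (fun r => volume (B₁ ∩ Metric.closedBall x r) / volume (Metric.closedBall x r))
      (𝓝[>] 0) (𝓝 1)} with hB₂def
  have hB₂B₁ : B₂ ⊆ B₁ := sep_subset _ _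
  have hB₁B₂ : volume (B₁ \ B₂) = 0 := by
    have h1 := Besicovitch.ae_tendsto_measure_inter_div (volume : Measure ℝ) B₁
    rw [ae_iff] at h1
    rw [Measure.restrict_apply' hB₁m] at h1
    refine measure_mono_null ?_ h1
    rintro x ⟨hx1, hx2⟩
    refine ⟨?_, hx1⟩
    intro hT
    exact hx2 (by rw [hB₂def]; exact ⟨hx1, hT⟩)
  have hB₁K : B₁ ⊆ K := fun z hz => hBK (hB₁B hz)
  -- ψ has zero derivative on B₂
  have hψ0 : ∀ x ∈ B₂, HasDerivAt ψ 0 x := by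
    rintro x ⟨hxB₁, hxT⟩
    have hxK : x ∈ K := hB₁K hxB₁
    rw [hasDerivAt_iff_isLittleO, Asymptotics.isLittleO_iff]
    intro C hC
    set C' : ℝ := min (C/2) (1/2) with hC'def
    have hC'pos : 0 < C' := lt_min (by linarith) (by norm_num)
    have h2C' : 2 * C' ≤ C := by
      have := min_le_left (C/2) (1/2)
      simp only [← hC'def] at this
      linarith
    have hC'half : C' ≤ 1/2 := min_le_right _ _
    have hev : ∀ᶠ r in 𝓝[>] (0:ℝ),
        volume (Metric.closedBall x r \ B₁) ≤ ENNReal.ofReal (C * r) := by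
      have hmem : Ioi (1 - ENNReal.ofReal C') ∈ 𝓝 (1 : ℝ≥0∞) :=
        Ioi_mem_nhds (ENNReal.sub_lt_self ENNReal.one_ne_top one_ne_zero
          ((ENNReal.ofReal_pos.2 hC'pos).ne'))
      filter_upwards [hxT.eventually hmem, self_mem_nhdsWithin] with r hr hrpos
      rw [mem_Ioi] at hrpos
      have hcb : volume (Metric.closedBall x r) = ENNReal.ofReal (2*r) := by
        rw [Real.volume_closedBall]
      have hne0 : volume (Metric.closedBall x r) ≠ 0 := by
        rw [hcb]
        exact (ENNReal.ofReal_pos.2 (by linarith)).ne'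
      have hnetop : volume (Metric.closedBall x r) ≠ ⊤ := by
        rw [hcb]; exact ENNReal.ofReal_ne_top
      have h5 : (1 - ENNReal.ofReal C') * volume (Metric.closedBall x r)
          ≤ volume (B₁ ∩ Metric.closedBall x r) :=
        ((ENNReal.lt_div_iff_mul_lt (Or.inl hne0) (Or.inl hnetop)).1 hr).le
      have h6 : volume (Metric.closedBall x r \ B₁)
          = volume (Metric.closedBall x r) - volume (B₁ ∩ Metric.closedBall x r) := by
        rw [show Metric.closedBall x r \ B₁
            = Metric.closedBall x r \ (B₁ ∩ Metric.closedBall x r)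
            from (diff_inter_self_eq_diff).symm]
        exact measure_diff inter_subset_right
          (hB₁m.inter measurableSet_closedBall).nullMeasurableSet
          (ne_top_of_le_ne_top hnetop (measure_mono inter_subset_right))
      rw [h6]
      calc volume (Metric.closedBall x r) - volume (B₁ ∩ Metric.closedBall x r)
          ≤ volume (Metric.closedBall x r)
            - (1 - ENNReal.ofReal C') * volume (Metric.closedBall x r) :=
            tsub_le_tsub_left h5 _
        _ ≤ ENNReal.ofReal (C * r) := by
            rw [hcb, ← ENNReal.ofReal_one, ← ENNReal.ofReal_sub _ (le_of_lt hC'pos),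
              ← ENNReal.ofReal_mul (by linarith), ← ENNReal.ofReal_sub _ (by nlinarith)]
            exact ENNReal.ofReal_le_ofReal (by nlinarith)
    rw [eventually_nhdsWithin_iff] at hev
    rw [Metric.eventually_nhds_iff] at hev
    obtain ⟨δ, hδpos, hδ⟩ := hev
    have hball : Metric.ball x (min δ 1) ∈ 𝓝 x := Metric.ball_mem_nhds x (lt_min hδpos one_pos)
    filter_upwards [hball] with y hy
    simp only [smul_zero, sub_zero, Real.norm_eq_abs]
    rcases eq_or_ne y x with rfl | hyx
    · simp [mul_nonneg hC.le (abs_nonneg _)]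
    rw [Metric.mem_ball, Real.dist_eq] at hy
    set r : ℝ := |y - x| with hrdef
    have hr0 : 0 < r := abs_pos.2 (sub_ne_zero.2 hyx)
    have hrδ : r < δ := lt_of_lt_of_le hy (min_le_left _ _)
    have hr1 : r < 1 := lt_of_lt_of_le hy (min_le_right _ _)
    have hP : volume (Metric.closedBall x r \ B₁) ≤ ENNReal.ofReal (C * r) := by
      apply hδ (by rw [Real.dist_eq, sub_zero, abs_of_pos hr0]; exact hrδ)
      exact hr0
    have hCr : (0:ℝ) ≤ C * r := by positivity
    have main : ∀ a b : ℝ, c ≤ a → a ≤ b → Ioc a b ⊆ Metric.closedBall x r →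
        ψ b - ψ a ≤ C * r := by
      intro a b hca hab hsub
      have hd := hψdiff a b hca hab
      have key := measure_diff_add_inter (Ioc a b) hB₁m (μ := volume)
      have hIfin : volume (Ioc a b) ≠ ⊤ := measure_Ioc_lt_top.ne
      have t1 : (volume (Ioc a b \ B₁)).toReal
          = (b - a) - (volume (Ioc a b ∩ B₁)).toReal := by
        have h7 := congrArg ENNReal.toReal key
        rw [ENNReal.toReal_add (ne_top_of_le_ne_top hIfin (measure_mono diff_subset))
          (hfin a b), Real.volume_Ioc, ENNReal.toReal_ofReal (by linarith)] at h7
        linarith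
      have t2 : (volume (Ioc a b \ B₁)).toReal ≤ C * r := by
        have h8 := ENNReal.toReal_mono ENNReal.ofReal_ne_top
          (le_trans (measure_mono (diff_subset_diff_left hsub)) hP)
        rwa [ENNReal.toReal_ofReal hCr] at h8
      linarith
    rcases le_or_gt x y with hxy | hyxlt
    · have h9 : Ioc x y ⊆ Metric.closedBall x r := by
        intro z hz
        rw [Metric.mem_closedBall, Real.dist_eq, hrdef,
          abs_of_nonneg (show (0:ℝ) ≤ z - x by linarith [hz.1]),
          abs_of_nonneg (show (0:ℝ) ≤ y - x by linarith)]
        linarith [hz.2]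
      have := main x y (hcK x hxK) hxy h9
      rw [abs_of_nonneg (hψmono x y hxy).1]
      calc ψ y - ψ x ≤ C * r := this
        _ = C * |y - x| := rfl
    · have hcy : c ≤ y := by
        have h10 := hc1 x hxK
        have habs := (abs_lt.1 (show |y - x| < 1 from hr1)).1
        linarith
      have h9 : Ioc y x ⊆ Metric.closedBall x r := by
        intro z hz
        rw [Metric.mem_closedBall, Real.dist_eq, hrdef,
          abs_of_nonpos (show z - x ≤ (0:ℝ) by linarith [hz.2]),
          abs_of_nonpos (show y - x ≤ (0:ℝ) by linarith)]
        linarith [hz.1]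
      have := main y x hcy hyxlt.le h9
      rw [abs_sub_comm, abs_of_nonneg (hψmono y x hyxlt.le).1]
      calc ψ x - ψ y ≤ C * r := this
        _ = C * |y - x| := rfl
  -- image of B₂ under ψ is null
  have hψim : volume (ψ '' B₂) = 0 := by
    have hzero : (1 : ℝ →L[ℝ] ℝ).smulRight (0:ℝ) = 0 := by ext; simp
    refine addHaar_image_eq_zero_of_det_fderivWithin_eq_zero (volume : Measure ℝ)
      (f' := fun _ : ℝ => (1 : ℝ →L[ℝ] ℝ).smulRight (0:ℝ))
      (fun x hx => ((hψ0 x hx).hasFDerivAt).hasFDerivWithinAt) ?_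
    intro x _
    rw [hzero]
    simp [ContinuousLinearMap.det, LinearMap.det_zero]
  -- conclude
  have hB₂K : B₂ ⊆ K := fun z hz => hB₁K (hB₂B₁ hz)
  have hfac : ∀ a ∈ B₂, ∀ b ∈ B₂, dist (g a) (g b) ≤ L * dist (ψ a) (ψ b) := by
    intro a ha b hb
    rcases le_total a b with hab | hba
    · have h1 := hgψ a (hB₂K ha) b (hB₂K hb) hab
      have h2 : ψ b - ψ a ≤ |ψ a - ψ b| := by
        rw [abs_sub_comm]; exact le_abs_self _
      rw [Real.dist_eq]
      exact h1.trans (mul_le_mul_of_nonneg_left h2 L.coe_nonneg)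
    · have h1 := hgψ b (hB₂K hb) a (hB₂K ha) hba
      have h2 : ψ a - ψ b ≤ |ψ a - ψ b| := le_abs_self _
      rw [Real.dist_eq, dist_comm]
      exact h1.trans (mul_le_mul_of_nonneg_left h2 L.coe_nonneg)
  have hpart1 : μH[1] (g '' B₂) = 0 := image_null_of_factor B₂ g ψ L hfac hψim
  have hpart2 : μH[1] (g '' (B \ B₂)) = 0 := by
    have h1 := (hg.mono (show B \ B₂ ⊆ K from fun z hz => hBK hz.1)).hausdorffMeasure_image_le
      (zero_le_one (α := ℝ))
    have h2 : μH[(1:ℝ)] (B \ B₂) = 0 := by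
      rw [show (μH[1] : Measure ℝ) = volume from hausdorffMeasure_real]
      refine measure_mono_null (fun z hz => ?_) (measure_union_null hBB₁ hB₁B₂)
      by_cases h : z ∈ B₁
      · exact Or.inr ⟨h, hz.2⟩
      · exact Or.inl ⟨hz.1, h⟩
    rw [h2, mul_zero] at h1
    exact le_antisymm h1 zero_le
  have hsplit : g '' B ⊆ g '' B₂ ∪ g '' (B \ B₂) := by
    rw [← image_union]
    apply image_mono
    intro z hz
    by_cases h : z ∈ B₂
    exacts [Or.inl h, Or.inr ⟨hz, h⟩]
  exact measure_mono_null hsplit (measure_union_null hpart1 hpart2)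

/-- If the image under `f` of every bi-Lipschitz curve is `H¹`-null, then the image under
`f` of every Lipschitz curve is `H¹`-null. -/
theorem hausdorff_null_of_biLipschitz_null {M N : Type*} [MetricSpace M] [MetricSpace N]
    (f : M → N) (Lf : NNReal) (hf : LipschitzWith Lf f)
    (hbi : ∀ (K : Set ℝ), IsCompact K → ∀ (γ : ℝ → M), BiLipschitzOn γ K →
      H1 N (f '' (γ '' K)) = 0) :
    ∀ (K : Set ℝ), IsCompact K → ∀ (γ : ℝ → M) (C : NNReal), LipschitzOnWith C γ K →
      H1 N (f '' (γ '' K)) = 0 := by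
  intro K hK γ C hγ
  letI : MeasurableSpace N := borel N
  haveI : BorelSpace N := ⟨rfl⟩
  have hH1 : ∀ s : Set N, H1 N s = μH[1] s := fun s => rfl
  set g : ℝ → N := fun x => f (γ x) with hgdef
  have hg : LipschitzOnWith (Lf * C) g K := hf.comp_lipschitzOnWith hγ
  set Kn : ℕ → Set ℝ := fun n => {x ∈ K | ∀ y ∈ K, |x - y| < 1/(n+1) →
      |x - y| ≤ (n+1) * dist (γ x) (γ y)} with hKndef
  have hKnsub : ∀ n, Kn n ⊆ K := fun n => sep_subset _ _
  have hKncl : ∀ n, IsClosed (Kn n) := by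
    intro n
    apply IsSeqClosed.isClosed
    intro xs x hxs hxlim
    have hxK : x ∈ K := hK.isClosed.mem_of_tendsto hxlim
      (Eventually.of_forall fun m => (hxs m).1)
    refine ⟨hxK, fun y hy hlt => ?_⟩
    have hev : ∀ᶠ m in atTop, |xs m - y| < 1/(n+1) := by
      have h1 : Tendsto (fun m => |xs m - y|) atTop (𝓝 |x - y|) :=
        ((hxlim.sub_const y).abs)
      exact h1.eventually_lt_const hlt
    have hγlim : Tendsto (fun m => dist (γ (xs m)) (γ y)) atTop (𝓝 (dist (γ x) (γ y))) := by
      have hcw : ContinuousWithinAt γ K x := hγ.continuousOn x hxK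
      have h2 : Tendsto (fun m => γ (xs m)) atTop (𝓝 (γ x)) :=
        hcw.tendsto.comp (tendsto_nhdsWithin_iff.2
          ⟨hxlim, Eventually.of_forall fun m => (hxs m).1⟩)
      exact h2.dist tendsto_const_nhds
    have hineq : ∀ᶠ m in atTop, |xs m - y| ≤ (n+1) * dist (γ (xs m)) (γ y) :=
      hev.mono fun m hm => (hxs m).2 y hy hm
    exact le_of_tendsto_of_tendsto ((hxlim.sub_const y).abs)
      (hγlim.const_mul _) hineq
  have hpiece : ∀ (n : ℕ) (j : ℤ),
      μH[1] (g '' (Kn n ∩ Icc ((j:ℝ)/(2*(n+1))) ((j+1:ℝ)/(2*(n+1))))) = 0 := by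
    intro n j
    have hcpt : IsCompact (Kn n ∩ Icc ((j:ℝ)/(2*(n+1))) ((j+1:ℝ)/(2*(n+1)))) :=
      (hK.of_isClosed_subset (hKncl n) (hKnsub n)).inter_right isClosed_Icc
    have hbl : BiLipschitzOn γ (Kn n ∩ Icc ((j:ℝ)/(2*(n+1))) ((j+1:ℝ)/(2*(n+1)))) := by
      refine ⟨⟨C, hγ.mono (inter_subset_left.trans (hKnsub n))⟩, 1/(n+1), by positivity, ?_⟩
      intro x hx y hy
      rcases eq_or_ne x y with rfl | hne
      · simp
      have hn1 : (0:ℝ) < n + 1 := by positivity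
      have hxy : |x - y| < 1/(n+1) := by
        have h1 := hx.2.1
        have h2 := hx.2.2
        have h3 := hy.2.1
        have h4 := hy.2.2
        have hw : ((j+1:ℝ))/(2*(n+1)) - (j:ℝ)/(2*(n+1)) = 1/(2*(n+1)) := by
          field_simp
          ring
        have h5 : |x - y| ≤ 1/(2*(n+1)) := by
          rw [abs_le]
          constructor <;> nlinarith
        have : (1:ℝ)/(2*(n+1)) < 1/(n+1) := by
          rw [div_lt_div_iff₀ (by positivity) hn1]
          nlinarith
        linarith
      have h6 := hx.1.2 y (hKnsub n hy.1) hxy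
      rw [div_mul_eq_mul_div, div_le_iff₀ hn1]
      linarith [h6]
    have h0 := hbi _ hcpt γ hbl
    rw [hH1, image_image] at h0
    exact h0
  set B : Set ℝ := K \ ⋃ n, Kn n with hBdef
  have hBnull : μH[1] (g '' B) = 0 := by
    apply flat_part_null hK ?_ diff_subset g (Lf * C) hg ?_
    · exact (hK.isClosed.measurableSet).diff
        (MeasurableSet.iUnion fun n => (hKncl n).measurableSet)
    · intro x hx ε hε
      obtain ⟨n, hn⟩ := exists_nat_gt (max (1/ε) ((Lf:ℝ)/ε))
      have hn1 : (0:ℝ) < n + 1 := by positivity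
      have hmax1 : (1:ℝ)/ε < n + 1 := by
        have := le_max_left (1/ε) ((Lf:ℝ)/ε)
        linarith
      have hmax2 : (Lf:ℝ)/ε < n + 1 := by
        have := le_max_right (1/ε) ((Lf:ℝ)/ε)
        linarith
      have hεn : 1/((n:ℝ)+1) < ε := by
        rw [div_lt_iff₀ hn1]
        rw [div_lt_iff₀ hε] at hmax1
        nlinarith
      have hLfn : (Lf:ℝ)/((n:ℝ)+1) < ε := by
        rw [div_lt_iff₀ hn1]
        rw [div_lt_iff₀ hε] at hmax2
        nlinarith
      have hxKn : x ∉ Kn n := fun h => hx.2 (mem_iUnion.2 ⟨n, h⟩)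
      rw [hKndef] at hxKn
      simp only [mem_setOf_eq, not_and, not_forall] at hxKn
      obtain ⟨y, hyK, hylt, hyd⟩ := hxKn hx.1
      push_neg at hyd
      have hd0 : 0 ≤ ((n:ℝ)+1) * dist (γ x) (γ y) := by positivity
      have hyne : y ≠ x := by
        intro h
        rw [h] at hyd
        simp at hyd
      refine ⟨y, hyK, hyne, lt_trans hylt hεn, ?_⟩
      have h1 : dist (g x) (g y) ≤ Lf * dist (γ x) (γ y) := hf.dist_le_mul _ _
      have h2 : dist (γ x) (γ y) < |x - y| / ((n:ℝ)+1) := by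
        rw [lt_div_iff₀ hn1]
        linarith [hyd]
      calc dist (g x) (g y) ≤ Lf * dist (γ x) (γ y) := h1
        _ ≤ Lf * (|x - y| / ((n:ℝ)+1)) := mul_le_mul_of_nonneg_left h2.le Lf.coe_nonneg
        _ = ((Lf:ℝ)/((n:ℝ)+1)) * |x - y| := by ring
        _ ≤ ε * |x - y| := mul_le_mul_of_nonneg_right hLfn.le (abs_nonneg _)
  have hcover : K ⊆ B ∪ ⋃ n, ⋃ j : ℤ,
      (Kn n ∩ Icc ((j:ℝ)/(2*(n+1))) ((j+1:ℝ)/(2*(n+1)))) := by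
    intro x hx
    by_cases h : x ∈ ⋃ n, Kn n
    · right
      obtain ⟨n, hn⟩ := mem_iUnion.1 h
      have hn1 : (0:ℝ) < 2*(n+1) := by positivity
      refine mem_iUnion.2 ⟨n, mem_iUnion.2 ⟨⌊x * (2*(n+1))⌋, hn, ?_, ?_⟩⟩
      · rw [div_le_iff₀ hn1]
        exact Int.floor_le _
      · rw [le_div_iff₀ hn1]
        push_cast
        linarith [Int.lt_floor_add_one (x * (2*(n+1)))]
    · exact Or.inl ⟨hx, h⟩
  rw [hH1, image_image]
  refine measure_mono_null (image_mono hcover) ?_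
  rw [image_union]
  refine measure_union_null hBnull ?_
  rw [image_iUnion]
  refine measure_iUnion_null fun n => ?_
  rw [image_iUnion]
  exact measure_iUnion_null fun j => hpiece n j
end

section
/- Let f : M → N be a Lipschitz map between metric spaces. Then f is curve-flat if and only if for every Lipschitz curve γ : K → M (K ⊆ ℝ compact) and every Lipschitz function g : N → ℝ, the Lebesgue measure of (g∘f∘γ)(K) ⊆ ℝ is zero. -/
open MeasureTheory Filter Set Topology

/-- If `H` is expanding on `A` with constant `c > 0` and `H '' A` is null, then `A` is null. -/
lemma cf_null_of_expanding_image_null {H : ℝ → ℝ} {A : Set ℝ} {c : ℝ} (hc : 0 < c)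
    (hexp : ∀ x ∈ A, ∀ y ∈ A, c * |x - y| ≤ |H x - H y|)
    (him : volume (H '' A) = 0) : volume A = 0 := by
  set ρ : ℝ → ℝ := Function.invFunOn H A with hρ
  have hmem : ∀ b ∈ H '' A, ρ b ∈ A := by
    rintro b ⟨a, ha, rfl⟩; exact Function.invFunOn_mem ⟨a, ha, rfl⟩
  have heq : ∀ b ∈ H '' A, H (ρ b) = b := by
    rintro b ⟨a, ha, rfl⟩; exact Function.invFunOn_eq ⟨a, ha, rfl⟩
  have hlip : LipschitzOnWith (c⁻¹).toNNReal ρ (H '' A) := by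
    apply LipschitzOnWith.of_dist_le_mul
    intro b1 hb1 b2 hb2
    have h1 := hmem b1 hb1; have h2 := hmem b2 hb2
    have key := hexp (ρ b1) h1 (ρ b2) h2
    rw [heq b1 hb1, heq b2 hb2] at key
    rw [Real.dist_eq, Real.dist_eq, Real.coe_toNNReal _ (le_of_lt (inv_pos.mpr hc))]
    calc |ρ b1 - ρ b2| = c⁻¹ * (c * |ρ b1 - ρ b2|) := by field_simp
    _ ≤ c⁻¹ * |b1 - b2| := mul_le_mul_of_nonneg_left key (inv_pos.mpr hc).le
  have hsub : A ⊆ ρ '' (H '' A) := by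
    intro x hx
    refine ⟨H x, ⟨x, hx, rfl⟩, ?_⟩
    have hmem' : ρ (H x) ∈ A := hmem _ ⟨x, hx, rfl⟩
    have : H (ρ (H x)) = H x := heq _ ⟨x, hx, rfl⟩
    have h2 := hexp (ρ (H x)) hmem' x hx
    rw [this] at h2
    simp only [sub_self, abs_zero] at h2
    have : |ρ (H x) - x| = 0 := by
      nlinarith [abs_nonneg (ρ (H x) - x)]
    have := abs_eq_zero.mp this
    linarith
  have h1 : volume A ≤ volume (ρ '' (H '' A)) := measure_mono hsub
  have h2 : volume (ρ '' (H '' A)) = 0 := by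
    have h3 := hlip.hausdorffMeasure_image_le zero_le_one
    rw [hausdorffMeasure_real, him] at h3
    simpa using h3
  exact le_antisymm (h1.trans h2.le) zero_le

/-- If the image of `s` under `H` is Lebesgue-null, then at a.e. point of `s` where `H` is
differentiable, the derivative vanishes. -/
lemma cf_deriv_zero_ae_of_image_null {H : ℝ → ℝ} {s : Set ℝ} (hs : MeasurableSet s)
    (him : volume (H '' s) = 0) :
    ∀ᵐ x ∂(volume.restrict s), DifferentiableAt ℝ H x → deriv H x = 0 := by
  set A : ℕ → ℕ → ℤ → Set ℝ := fun n m k =>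
    {x | x ∈ s ∧ x ∈ Ico ((k:ℝ)/(m+1)) ((k+1)/(m+1)) ∧
      ∀ y : ℝ, |y - x| < 1/(m+1) → (1/(n+1))/2 * |y - x| ≤ |H y - H x|} with hA
  have hAnull : ∀ n m k, volume (A n m k) = 0 := by
    intro n m k
    apply cf_null_of_expanding_image_null (c := (1/(n+1))/2) (by positivity)
    · intro x hx y hy
      have hxy : |x - y| < 1/(m+1) := by
        rcases hx.2.1 with ⟨hx1, hx2⟩; rcases hy.2.1 with ⟨hy1, hy2⟩
        have hw : ((k:ℝ)+1)/((m:ℝ)+1) - (k:ℝ)/((m:ℝ)+1) = 1/((m:ℝ)+1) := by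
          rw [div_sub_div_same]; ring_nf
        rw [abs_sub_lt_iff]
        constructor <;> linarith
      have := hx.2.2 y (by rwa [abs_sub_comm])
      rwa [abs_sub_comm y x, abs_sub_comm (H y)] at this
    · exact measure_mono_null (image_mono (fun x hx => hx.1)) him
  have hcover : {x | x ∈ s ∧ DifferentiableAt ℝ H x ∧ deriv H x ≠ 0} ⊆
      ⋃ (n : ℕ) (m : ℕ) (k : ℤ), A n m k := by
    rintro x ⟨hxs, hdiff, hd0⟩
    have hc : 0 < |deriv H x| := abs_pos.mpr hd0
    obtain ⟨n, hn⟩ := exists_nat_gt (1/|deriv H x|)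
    have hn' : 1/((n:ℝ)+1) < |deriv H x| := by
      rw [div_lt_iff₀ (by positivity)]
      rw [div_lt_iff₀ hc] at hn
      nlinarith
    have hlo := hdiff.hasDerivAt.isLittleO
    have hev := hlo.def (show (0:ℝ) < (1/((n:ℝ)+1))/2 by positivity)
    rw [Metric.eventually_nhds_iff] at hev
    obtain ⟨ε, hε, hball⟩ := hev
    obtain ⟨m, hm⟩ := exists_nat_gt (1/ε)
    have hm' : 1/((m:ℝ)+1) < ε := by
      rw [div_lt_iff₀ (by positivity)]
      rw [div_lt_iff₀ hε] at hm
      nlinarith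
    refine mem_iUnion.mpr ⟨n, mem_iUnion.mpr ⟨m, mem_iUnion.mpr ⟨⌊x * ((m:ℝ)+1)⌋, ?_⟩⟩⟩
    refine ⟨hxs, ⟨?_, ?_⟩, ?_⟩
    · rw [div_le_iff₀ (by positivity : (0:ℝ) < (m:ℝ)+1)]
      exact Int.floor_le _
    · rw [lt_div_iff₀ (by positivity : (0:ℝ) < (m:ℝ)+1)]
      exact Int.lt_floor_add_one _
    · intro y hy
      have hyx : dist y x < ε := by rw [Real.dist_eq]; exact hy.trans hm'
      have hb := hball hyx
      simp only [ContinuousLinearMap.smulRight_apply, ContinuousLinearMap.one_apply,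
        Real.norm_eq_abs, smul_eq_mul] at hb
      have h1 : |y - x| * |deriv H x| ≤ |H y - H x| + |H y - H x - (y - x) * deriv H x| := by
        calc |y - x| * |deriv H x| = |(y - x) * deriv H x| := (abs_mul _ _).symm
        _ = |(H y - H x) - (H y - H x - (y - x) * deriv H x)| := by congr 1; ring
        _ ≤ |H y - H x| + |H y - H x - (y - x) * deriv H x| := abs_sub _ _
      have h2 : |y - x| * (1/((n:ℝ)+1)) ≤ |y - x| * |deriv H x| :=
        mul_le_mul_of_nonneg_left hn'.le (abs_nonneg _)
      nlinarith [abs_nonneg (y - x)]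
  have hnull : volume {x | x ∈ s ∧ DifferentiableAt ℝ H x ∧ deriv H x ≠ 0} = 0 :=
    measure_mono_null hcover (measure_iUnion_null fun n => measure_iUnion_null fun m =>
      measure_iUnion_null fun k => hAnull n m k)
  rw [ae_restrict_iff' hs]
  rw [ae_iff]
  apply measure_mono_null _ hnull
  intro x hx
  simp only [mem_setOf_eq, not_forall] at hx ⊢
  tauto

lemma cf_tendsto_avg_integral {H : ℝ → ℝ} (hcont : Continuous H) (a : ℝ) :
    Tendsto (fun n : ℕ => (∫ r in a..(a + 1/((n:ℝ)+1)), H r) * ((n:ℝ)+1)) atTop (𝓝 (H a)) := by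
  have hder : HasDerivAt (fun u => ∫ x in a..u, H x) (H a) a :=
    intervalIntegral.integral_hasDerivAt_right (hcont.intervalIntegrable _ _)
      (hcont.stronglyMeasurableAtFilter _ _) hcont.continuousAt
  have hslope := hasDerivAt_iff_tendsto_slope.mp hder
  have hu : Tendsto (fun n : ℕ => a + 1/((n:ℝ)+1)) atTop (𝓝[≠] a) := by
    apply tendsto_nhdsWithin_of_tendsto_nhds_of_eventually_within
    · have := tendsto_one_div_add_atTop_nhds_zero_nat (𝕜 := ℝ)
      have h2 := this.const_add a
      simpa using h2
    · filter_upwards with n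
      simp only [mem_compl_iff, mem_singleton_iff]
      have : (0:ℝ) < 1/((n:ℝ)+1) := by positivity
      intro h; nlinarith
  have := hslope.comp hu
  apply this.congr
  intro n
  have hne : (1:ℝ)/((n:ℝ)+1) ≠ 0 := by positivity
  simp only [Function.comp_apply, slope_def_field, intervalIntegral.integral_same]
  rw [sub_zero, add_sub_cancel_left]
  field_simp

/-- Fundamental theorem of calculus for Lipschitz functions on `ℝ`. -/
lemma cf_lipschitz_integral_deriv {H : ℝ → ℝ} {L : NNReal} (hH : LipschitzWith L H)
    (s t : ℝ) : H t - H s = ∫ r in s..t, deriv H r := by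
  have hcont : Continuous H := hH.continuous
  set F : ℕ → ℝ → ℝ := fun n r => (H (r + 1/((n:ℝ)+1)) - H r) * ((n:ℝ)+1) with hF
  have stepA : Tendsto (fun n => ∫ r in s..t, F n r) atTop (𝓝 (∫ r in s..t, deriv H r)) := by
    apply intervalIntegral.tendsto_integral_filter_of_dominated_convergence (bound := fun _ => (L:ℝ))
    · filter_upwards with n
      exact (((hcont.comp (continuous_add_right _)).sub hcont).mul continuous_const).aestronglyMeasurable
    · filter_upwards with n
      filter_upwards with x _
      have hd : |H (x + 1/((n:ℝ)+1)) - H x| ≤ (L:ℝ) * (1/((n:ℝ)+1)) := by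
        have := hH.dist_le_mul (x + 1/((n:ℝ)+1)) x
        rw [Real.dist_eq, Real.dist_eq, add_sub_cancel_left, abs_of_pos (by positivity : (0:ℝ) < 1/((n:ℝ)+1))] at this
        exact this
      have : ‖F n x‖ = |H (x + 1/((n:ℝ)+1)) - H x| * ((n:ℝ)+1) := by
        rw [hF]; simp only [Real.norm_eq_abs, abs_mul]
        congr 1; exact abs_of_pos (by positivity)
      rw [this]
      calc |H (x + 1/((n:ℝ)+1)) - H x| * ((n:ℝ)+1) ≤ ((L:ℝ) * (1/((n:ℝ)+1))) * ((n:ℝ)+1) :=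
        mul_le_mul_of_nonneg_right hd (by positivity)
      _ = (L:ℝ) := by field_simp
    · exact intervalIntegrable_const
    · have hae := hH.ae_differentiableAt (μ := volume)
      filter_upwards [hae] with x hx _
      have hslope := hasDerivAt_iff_tendsto_slope.mp hx.hasDerivAt
      have hu : Tendsto (fun n : ℕ => x + 1/((n:ℝ)+1)) atTop (𝓝[≠] x) := by
        apply tendsto_nhdsWithin_of_tendsto_nhds_of_eventually_within
        · have h2 := tendsto_one_div_add_atTop_nhds_zero_nat.const_add x
          simpa using h2
        · filter_upwards with n
          simp only [mem_compl_iff, mem_singleton_iff]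
          have : (0:ℝ) < 1/((n:ℝ)+1) := by positivity
          intro h; nlinarith
      have := hslope.comp hu
      apply this.congr
      intro n
      simp only [Function.comp_apply, slope_def_field, add_sub_cancel_left]
      rw [div_eq_mul_inv, one_div, inv_inv]
      simp [hF, one_div]
  have stepB : Tendsto (fun n => ∫ r in s..t, F n r) atTop (𝓝 (H t - H s)) := by
    have hint : ∀ a b : ℝ, IntervalIntegrable H volume a b := fun a b => hcont.intervalIntegrable a b
    have key : ∀ n : ℕ, ∫ r in s..t, F n r =
        (∫ r in t..(t + 1/((n:ℝ)+1)), H r) * ((n:ℝ)+1) - (∫ r in s..(s + 1/((n:ℝ)+1)), H r) * ((n:ℝ)+1) := by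
      intro n
      set h : ℝ := 1/((n:ℝ)+1) with hh
      have e1 : ∫ r in s..t, F n r = ((∫ r in s..t, H (r + h)) - ∫ r in s..t, H r) * ((n:ℝ)+1) := by
        have hi1 : IntervalIntegrable (fun r => H (r + h)) volume s t :=
          (hcont.comp (continuous_add_right h)).intervalIntegrable s t
        rw [← intervalIntegral.integral_sub hi1 (hint s t), ← intervalIntegral.integral_mul_const]
      rw [e1, intervalIntegral.integral_comp_add_right]
      have e2 : (∫ r in (s+h)..(t+h), H r) - ∫ r in s..t, H r =
          (∫ r in t..(t+h), H r) - ∫ r in s..(s+h), H r := by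
        have a1 : (∫ r in s..(s+h), H r) + ∫ r in (s+h)..(t+h), H r = ∫ r in s..(t+h), H r :=
          intervalIntegral.integral_add_adjacent_intervals (hint _ _) (hint _ _)
        have a2 : (∫ r in s..t, H r) + ∫ r in t..(t+h), H r = ∫ r in s..(t+h), H r :=
          intervalIntegral.integral_add_adjacent_intervals (hint _ _) (hint _ _)
        linarith
      rw [e2]; ring
    rw [show (fun n => ∫ r in s..t, F n r) =
      (fun n : ℕ => (∫ r in t..(t + 1/((n:ℝ)+1)), H r) * ((n:ℝ)+1) - (∫ r in s..(s + 1/((n:ℝ)+1)), H r) * ((n:ℝ)+1))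
      from funext key]
    exact (cf_tendsto_avg_integral hcont t).sub (cf_tendsto_avg_integral hcont s)
  have := tendsto_nhds_unique stepA stepB
  linarith

lemma cf_density {K : Set ℝ} (hK : MeasurableSet K) : ∀ᵐ x ∂(volume.restrict K),
    Tendsto (fun r => (volume (Kᶜ ∩ Metric.closedBall x r)).toReal / r) (𝓝[>] (0:ℝ)) (𝓝 0) := by
  filter_upwards [Besicovitch.ae_tendsto_measure_inter_div volume K] with x hx
  have h2 : Tendsto (fun r => (volume (K ∩ Metric.closedBall x r)).toReal / (2*r))
      (𝓝[>] (0:ℝ)) (𝓝 1) := by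
    have hcont : Tendsto ENNReal.toReal (𝓝 1) (𝓝 1) := by
      have := ENNReal.tendsto_toReal (a := 1) (by norm_num)
      simpa using this
    have h3 := hcont.comp hx
    apply h3.congr'
    filter_upwards [self_mem_nhdsWithin] with r (hr : 0 < r)
    have hball : volume (Metric.closedBall x r) = ENNReal.ofReal (2*r) := by
      rw [Real.volume_closedBall, mul_comm]
    simp only [Function.comp_apply]
    rw [ENNReal.toReal_div, hball, ENNReal.toReal_ofReal (by positivity)]
  have h4 : Tendsto (fun r => 2 - 2 * ((volume (K ∩ Metric.closedBall x r)).toReal / (2*r)))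
      (𝓝[>] (0:ℝ)) (𝓝 0) := by
    have := (h2.const_mul (2:ℝ)).const_sub 2
    simpa using this
  apply h4.congr'
  filter_upwards [self_mem_nhdsWithin] with r (hr : 0 < r)
  have hball : volume (Metric.closedBall x r) = ENNReal.ofReal (2*r) := by
    rw [Real.volume_closedBall, mul_comm]
  have hsplit : volume (Metric.closedBall x r ∩ K) + volume (Metric.closedBall x r \ K)
      = volume (Metric.closedBall x r) := measure_inter_add_diff _ hK
  have hfin : volume (K ∩ Metric.closedBall x r) ≠ ⊤ := by
    apply ne_of_lt (lt_of_le_of_lt (measure_mono inter_subset_right) _)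
    rw [hball]; exact ENNReal.ofReal_lt_top
  have hfin2 : volume (Kᶜ ∩ Metric.closedBall x r) ≠ ⊤ := by
    apply ne_of_lt (lt_of_le_of_lt (measure_mono inter_subset_right) _)
    rw [hball]; exact ENNReal.ofReal_lt_top
  have heq : (volume (Kᶜ ∩ Metric.closedBall x r)).toReal
      = 2*r - (volume (K ∩ Metric.closedBall x r)).toReal := by
    have e1 : Metric.closedBall x r \ K = Kᶜ ∩ Metric.closedBall x r := by
      rw [diff_eq, inter_comm]
    have e2 : Metric.closedBall x r ∩ K = K ∩ Metric.closedBall x r := inter_comm _ _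
    rw [e1, e2] at hsplit
    have := congrArg ENNReal.toReal hsplit
    rw [ENNReal.toReal_add hfin hfin2, hball, ENNReal.toReal_ofReal (by positivity)] at this
    linarith
  rw [heq]
  field_simp

lemma cf_reverse {M N : Type*} [MetricSpace M] [MetricSpace N]
    (f : M → N) (Lf : NNReal) (hf : LipschitzWith Lf f)
    (hyp : ∀ (K : Set ℝ), IsCompact K → ∀ (γ : ℝ → M) (C : NNReal),
      LipschitzOnWith C γ K → ∀ (g : N → ℝ) (Cg : NNReal), LipschitzWith Cg g →
        volume ((g ∘ f ∘ γ) '' K) = 0) : CurveFlat f := by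
  intro K hK γ C hγ
  set F : ℝ → N := fun t => f (γ t) with hFdef
  have hKm : MeasurableSet K := hK.measurableSet
  rcases K.eq_empty_or_nonempty with rfl | ⟨t0, ht0⟩
  · simp
  have hFK : LipschitzOnWith (Lf * C) F K := hf.comp_lipschitzOnWith hγ
  set L : ℝ := ((Lf * C : NNReal) : ℝ) with hLdef
  have hL0 : 0 ≤ L := NNReal.coe_nonneg _
  -- countable dense family in F '' K
  have hTcpt : IsCompact (F '' K) := hK.image_of_continuousOn
    (hf.continuous.comp_continuousOn hγ.continuousOn)
  obtain ⟨cs, hcs_ct, hcs_sub⟩ := hTcpt.isSeparable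
  have hcs_ne : cs.Nonempty := by
    rcases cs.eq_empty_or_nonempty with rfl | h
    · exfalso
      have : F t0 ∈ closure (∅ : Set N) := hcs_sub ⟨t0, ht0, rfl⟩
      simpa using this
    · exact h
  obtain ⟨z, hz⟩ := hcs_ct.exists_eq_range hcs_ne
  have hdense : ∀ p ∈ F '' K, ∀ ε : ℝ, 0 < ε → ∃ i : ℕ, dist p (z i) < ε := by
    intro p hp ε hε
    have := hcs_sub hp
    rw [Metric.mem_closure_iff] at this
    obtain ⟨q, hq, hdq⟩ := this ε hε
    rw [hz] at hq
    obtain ⟨i, rfl⟩ := hq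
    exact ⟨i, hdq⟩
  -- the functions φ i and their Lipschitz extensions Φ i
  have hφ : ∀ i : ℕ, LipschitzOnWith (1 * (Lf * C)) (fun t => dist (F t) (z i)) K :=
    fun i => (LipschitzWith.dist_left (z i)).comp_lipschitzOnWith hFK
  choose Φ hΦlip hΦeq using fun i => (hφ i).extend_real
  -- each Φ i has null image on K
  have him : ∀ i : ℕ, volume (Φ i '' K) = 0 := by
    intro i
    have := hyp K hK γ C hγ (fun p => dist p (z i)) 1 (LipschitzWith.dist_left (z i))
    have heq : (fun p => dist p (z i)) ∘ f ∘ γ = fun t => dist (F t) (z i) := rfl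
    rw [← (hΦeq i).image_eq]
    rwa [heq] at this
  -- derivatives of Φ i vanish a.e. on K
  have hderiv : ∀ᵐ x ∂(volume.restrict K), ∀ i : ℕ, deriv (Φ i) x = 0 := by
    rw [ae_all_iff]
    intro i
    filter_upwards [cf_deriv_zero_ae_of_image_null hKm (him i),
      ae_restrict_of_ae ((hΦlip i).ae_differentiableAt (μ := volume))] with x h1 h2
    exact h1 h2
  -- the bad set S and good set G
  set S : Set ℝ := {x | ¬ ∀ i : ℕ, deriv (Φ i) x = 0} with hSdef
  have hSm : MeasurableSet S := by
    have : S = (⋂ i : ℕ, {x | deriv (Φ i) x = 0})ᶜ := by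
      ext x; simp [hSdef]
    rw [this]
    exact (MeasurableSet.iInter fun i =>
      (measurable_deriv (Φ i)) (measurableSet_singleton 0)).compl
  have hSK : volume (S ∩ K) = 0 := by
    have := ae_iff.mp hderiv
    rwa [Measure.restrict_apply hSm] at this
  set G : Set ℝ := K \ S with hGdef
  have hGm : MeasurableSet G := hKm.diff hSm
  set Mf : ℝ → ℝ := fun r => L * (Gᶜ).indicator (fun _ => (1:ℝ)) r with hMdef
  have hM_meas : Measurable Mf :=
    (measurable_const.indicator hGm.compl).const_mul L
  have hM_bd : ∀ r, |Mf r| ≤ L := by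
    intro r
    rw [hMdef]
    by_cases h : r ∈ Gᶜ <;>
      simp [indicator_of_mem, indicator_of_notMem, h, abs_of_nonneg, hL0]
  have hM_nonneg : ∀ r, 0 ≤ Mf r := by
    intro r
    by_cases h : r ∈ Gᶜ <;> simp [hMdef, indicator_of_mem, indicator_of_notMem, h, hL0]
  have hconst_int : ∀ s t : ℝ, IntegrableOn (fun _ : ℝ => L) (Set.uIoc s t) volume := by
    intro s t
    apply (integrableOn_const_iff (C := L) (hC := by finiteness)).mpr
    right
    rw [uIoc, Real.volume_Ioc]
    exact ENNReal.ofReal_lt_top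
  have hM_int : ∀ s t : ℝ, IntervalIntegrable Mf volume s t := by
    intro s t
    rw [intervalIntegrable_iff]
    exact (hconst_int s t).mono' hM_meas.aestronglyMeasurable
      (Filter.Eventually.of_forall fun r => by simpa using hM_bd r)
  -- derivative bound for deriv of Lipschitz functions
  have hd_bd : ∀ i : ℕ, ∀ r : ℝ, |deriv (Φ i) r| ≤ L := by
    intro i r
    by_cases h : DifferentiableAt ℝ (Φ i) r
    · have h1 : ‖fderiv ℝ (Φ i) r‖ ≤ ((1 * (Lf * C) : NNReal):ℝ) :=
        norm_fderiv_le_of_lipschitz ℝ (hΦlip i)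
      have h2 : deriv (Φ i) r = fderiv ℝ (Φ i) r 1 := rfl
      have h3 : |fderiv ℝ (Φ i) r 1| ≤ ‖fderiv ℝ (Φ i) r‖ := by
        have := (fderiv ℝ (Φ i) r).le_opNorm 1
        simpa using this
      rw [h2]
      refine h3.trans (h1.trans ?_)
      simp [hLdef]
    · rw [deriv_zero_of_not_differentiableAt h]
      simpa using hL0
  have hd_int : ∀ i : ℕ, ∀ s t : ℝ, IntervalIntegrable (fun r => |deriv (Φ i) r|) volume s t := by
    intro i s t
    rw [intervalIntegrable_iff]
    exact (hconst_int s t).mono'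
      ((measurable_deriv (Φ i)).abs.aestronglyMeasurable)
      (Filter.Eventually.of_forall fun r => by simpa [abs_abs] using hd_bd i r)
  -- a.e. bound |deriv Φ i| ≤ Mf
  have hae_bd : ∀ i : ℕ, ∀ᵐ r ∂volume, |deriv (Φ i) r| ≤ Mf r := by
    intro i
    have hE : ∀ᵐ r ∂volume, r ∉ S ∩ K := by
      rw [ae_iff]
      simpa using hSK
    filter_upwards [hE] with r hr
    by_cases hG : r ∈ G
    · have : deriv (Φ i) r = 0 := by
        have hrS : r ∉ S := hG.2
        rw [hSdef] at hrS
        simp only [mem_setOf_eq, not_not] at hrS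
        exact hrS i
      rw [this]
      simpa using hM_nonneg r
    · have : Mf r = L := by simp [hMdef, indicator_of_mem, hG]
      rw [this]
      exact hd_bd i r
  -- key estimate
  have hkey : ∀ s ∈ K, ∀ t ∈ K, s ≤ t → dist (F s) (F t) ≤ ∫ r in s..t, Mf r := by
    intro s hs t ht hst
    apply le_of_forall_pos_le_add
    intro ε hε
    obtain ⟨i, hi⟩ := hdense (F t) ⟨t, ht, rfl⟩ (ε/2) (by positivity)
    have tri : dist (F s) (F t) ≤ |dist (F s) (z i) - dist (F t) (z i)| + 2 * dist (F t) (z i) := by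
      have h1 := abs_dist_sub_le (F s) (F t) (z i)
      have h2 := abs_nonneg (dist (F s) (z i) - dist (F t) (z i))
      have h3 := abs_le.mp (le_refl |dist (F s) (z i) - dist (F t) (z i)|)
      cases abs_cases (dist (F s) (z i) - dist (F t) (z i)) with
      | inl h => nlinarith [dist_triangle (F s) (z i) (F t), dist_comm (z i) (F t),
          (dist_nonneg : (0:ℝ) ≤ dist (F t) (z i))]
      | inr h => nlinarith [dist_triangle (F s) (z i) (F t), dist_comm (z i) (F t),
          (dist_nonneg : (0:ℝ) ≤ dist (F t) (z i))]
    have heqs : dist (F s) (z i) = Φ i s := hΦeq i hs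
    have heqt : dist (F t) (z i) = Φ i t := hΦeq i ht
    have hftc : Φ i t - Φ i s = ∫ r in s..t, deriv (Φ i) r := cf_lipschitz_integral_deriv (hΦlip i) s t
    have habs : |Φ i s - Φ i t| ≤ ∫ r in s..t, |deriv (Φ i) r| := by
      rw [abs_sub_comm, hftc]
      exact intervalIntegral.abs_integral_le_integral_abs hst
    have hmono : (∫ r in s..t, |deriv (Φ i) r|) ≤ ∫ r in s..t, Mf r :=
      intervalIntegral.integral_mono_ae hst (hd_int i s t) (hM_int s t) (hae_bd i)
    calc dist (F s) (F t) ≤ |dist (F s) (z i) - dist (F t) (z i)| + 2 * dist (F t) (z i) := tri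
    _ ≤ |Φ i s - Φ i t| + 2 * (ε/2) := by
        rw [heqs, heqt]
        have := hi.le
        nlinarith
    _ ≤ (∫ r in s..t, Mf r) + ε := by
        have := habs.trans hmono
        linarith
  -- integral of Mf bounded by measure of complement of K
  have hint_bd : ∀ s t : ℝ, s ≤ t → (∫ r in s..t, Mf r) ≤ L * (volume (Kᶜ ∩ Ioc s t)).toReal := by
    intro s t hst
    have e1 : (∫ r in s..t, Mf r) = ∫ r in Ioc s t, Mf r := intervalIntegral.integral_of_le hst
    rw [e1, hMdef]
    simp only [MeasureTheory.integral_const_mul]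
    rw [setIntegral_indicator hGm.compl]
    rw [setIntegral_const]
    simp only [smul_eq_mul, mul_one]
    apply mul_le_mul_of_nonneg_left _ hL0
    have hfin1 : volume (Ioc s t ∩ Gᶜ) ≠ ⊤ := by
      apply ne_of_lt (lt_of_le_of_lt (measure_mono inter_subset_left) _)
      rw [Real.volume_Ioc]
      exact ENNReal.ofReal_lt_top
    have hfin2 : volume (Kᶜ ∩ Ioc s t) ≠ ⊤ := by
      apply ne_of_lt (lt_of_le_of_lt (measure_mono inter_subset_right) _)
      rw [Real.volume_Ioc]
      exact ENNReal.ofReal_lt_top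
    apply (ENNReal.toReal_le_toReal hfin1 hfin2).mpr
    have hsub : Ioc s t ∩ Gᶜ ⊆ (Kᶜ ∩ Ioc s t) ∪ (S ∩ K) := by
      rintro x ⟨hx1, hx2⟩
      rw [hGdef, compl_def] at hx2
      simp only [mem_setOf_eq, mem_diff, not_and, not_not] at hx2
      by_cases hxK : x ∈ K
      · right
        refine ⟨?_, hxK⟩
        rw [hSdef]
        exact hx2 hxK
      · exact Or.inl ⟨hxK, hx1⟩
    calc volume (Ioc s t ∩ Gᶜ) ≤ volume ((Kᶜ ∩ Ioc s t) ∪ (S ∩ K)) := measure_mono hsub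
    _ ≤ volume (Kᶜ ∩ Ioc s t) + volume (S ∩ K) := measure_union_le _ _
    _ = volume (Kᶜ ∩ Ioc s t) := by rw [hSK, add_zero]
  -- conclusion via density points
  filter_upwards [cf_density hKm, ae_restrict_mem hKm] with x hx hxK
  have hq : Tendsto (fun y : ℝ => L * ((volume (Kᶜ ∩ Metric.closedBall x |x - y|)).toReal / |x - y|))
      (𝓝[K \ {x}] x) (𝓝 0) := by
    have habs : Tendsto (fun y : ℝ => |x - y|) (𝓝[K \ {x}] x) (𝓝[>] 0) := by
      apply tendsto_nhdsWithin_of_tendsto_nhds_of_eventually_within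
      · have h0 : Tendsto (fun y : ℝ => |x - y|) (𝓝 x) (𝓝 |x - x|) :=
          ((continuous_const.sub continuous_id).abs.tendsto x)
        simp only [sub_self, abs_zero] at h0
        exact h0.mono_left nhdsWithin_le_nhds
      · filter_upwards [self_mem_nhdsWithin] with y hy
        have : y ≠ x := hy.2
        have : x - y ≠ 0 := sub_ne_zero.mpr (Ne.symm this)
        exact mem_Ioi.mpr (abs_pos.mpr this)
    have := (hx.comp habs).const_mul L
    simpa using this
  apply squeeze_zero' ?_ ?_ hq
  · filter_upwards with y
    exact div_nonneg dist_nonneg (abs_nonneg _)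
  · filter_upwards [self_mem_nhdsWithin] with y hy
    have hyK : y ∈ K := hy.1
    have hyx : y ≠ x := hy.2
    have hpos : 0 < |x - y| := abs_pos.mpr (sub_ne_zero.mpr (Ne.symm hyx))
    have hfinB : volume (Kᶜ ∩ Metric.closedBall x |x - y|) ≠ ⊤ := by
      apply ne_of_lt (lt_of_le_of_lt (measure_mono inter_subset_right) _)
      rw [Real.volume_closedBall]
      exact ENNReal.ofReal_lt_top
    have main : dist (F x) (F y) ≤ L * (volume (Kᶜ ∩ Metric.closedBall x |x - y|)).toReal := by
      rcases le_total x y with hxy | hxy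
      · have h1 : dist (F x) (F y) ≤ L * (volume (Kᶜ ∩ Ioc x y)).toReal :=
          (hkey x hxK y hyK hxy).trans (hint_bd x y hxy)
        have hsub : Ioc x y ⊆ Metric.closedBall x |x - y| := by
          intro r hr
          rw [Metric.mem_closedBall, Real.dist_eq]
          have he : |x - y| = y - x := by rw [abs_sub_comm, abs_of_nonneg (by linarith)]
          have he2 : |r - x| = r - x := abs_of_nonneg (by linarith [hr.1])
          rw [he, he2]
          linarith [hr.2]
        have hfinA : volume (Kᶜ ∩ Ioc x y) ≠ ⊤ := by
          apply ne_of_lt (lt_of_le_of_lt (measure_mono inter_subset_right) _)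
          rw [Real.volume_Ioc]
          exact ENNReal.ofReal_lt_top
        have h2 : (volume (Kᶜ ∩ Ioc x y)).toReal
            ≤ (volume (Kᶜ ∩ Metric.closedBall x |x - y|)).toReal :=
          (ENNReal.toReal_le_toReal hfinA hfinB).mpr
            (measure_mono (inter_subset_inter_right _ hsub))
        exact h1.trans (mul_le_mul_of_nonneg_left h2 hL0)
      · have h1 : dist (F x) (F y) ≤ L * (volume (Kᶜ ∩ Ioc y x)).toReal := by
          rw [dist_comm]
          exact (hkey y hyK x hxK hxy).trans (hint_bd y x hxy)
        have hsub : Ioc y x ⊆ Metric.closedBall x |x - y| := by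
          intro r hr
          rw [Metric.mem_closedBall, Real.dist_eq]
          have he : |x - y| = x - y := abs_of_nonneg (by linarith)
          have he2 : |r - x| = x - r := by rw [abs_sub_comm, abs_of_nonneg (by linarith [hr.2])]
          rw [he, he2]
          linarith [hr.1]
        have hfinA : volume (Kᶜ ∩ Ioc y x) ≠ ⊤ := by
          apply ne_of_lt (lt_of_le_of_lt (measure_mono inter_subset_right) _)
          rw [Real.volume_Ioc]
          exact ENNReal.ofReal_lt_top
        have h2 : (volume (Kᶜ ∩ Ioc y x)).toReal
            ≤ (volume (Kᶜ ∩ Metric.closedBall x |x - y|)).toReal :=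
          (ENNReal.toReal_le_toReal hfinA hfinB).mpr
            (measure_mono (inter_subset_inter_right _ hsub))
        exact h1.trans (mul_le_mul_of_nonneg_left h2 hL0)
    calc dist (f (γ x)) (f (γ y)) / |x - y|
        ≤ (L * (volume (Kᶜ ∩ Metric.closedBall x |x - y|)).toReal) / |x - y| := by
          gcongr
    _ = L * ((volume (Kᶜ ∩ Metric.closedBall x |x - y|)).toReal / |x - y|) := by ring

lemma cf_lipschitz_image_null {h : ℝ → ℝ} {s : Set ℝ} {C : NNReal}
    (hh : LipschitzOnWith C h s) (hs : volume s = 0) : volume (h '' s) = 0 := by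
  have h3 := hh.hausdorffMeasure_image_le zero_le_one
  rw [hausdorffMeasure_real, hs] at h3
  simpa using h3

lemma cf_forward {M N : Type*} [MetricSpace M] [MetricSpace N]
    (f : M → N) (Lf : NNReal) (hf : LipschitzWith Lf f) (hcf : CurveFlat f)
    (K : Set ℝ) (hK : IsCompact K) (γ : ℝ → M) (C : NNReal) (hγ : LipschitzOnWith C γ K)
    (g : N → ℝ) (Cg : NNReal) (hg : LipschitzWith Cg g) :
    volume ((g ∘ f ∘ γ) '' K) = 0 := by
  set h : ℝ → ℝ := g ∘ f ∘ γ with hhdef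
  have hKm : MeasurableSet K := hK.measurableSet
  have hh : LipschitzOnWith (Cg * (Lf * C)) h K := hg.comp_lipschitzOnWith (hf.comp_lipschitzOnWith hγ)
  have hae := hcf K hK γ C hγ
  rw [ae_iff] at hae
  obtain ⟨B, hBsub, hBm, hB0⟩ := exists_measurable_superset_of_null hae
  rw [Measure.restrict_apply hBm] at hB0
  set A : Set ℝ := K \ B with hAdef
  have hAm : MeasurableSet A := hKm.diff hBm
  have hAP : ∀ x ∈ A, Tendsto (fun y => dist (f (γ x)) (f (γ y)) / |x - y|)
      (𝓝[K \ {x}] x) (𝓝 0) := by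
    intro x hx
    by_contra hcon
    exact hx.2 (hBsub hcon)
  have hKA_null : volume (K \ A) = 0 := by
    apply measure_mono_null _ hB0
    rintro x ⟨hxK, hxA⟩
    have hxB : x ∈ B := by
      by_contra hB
      exact hxA ⟨hxK, hB⟩
    exact ⟨hxB, hxK⟩
  -- image of the null part
  have him1 : volume (h '' (K \ A)) = 0 :=
    cf_lipschitz_image_null (hh.mono diff_subset) hKA_null
  -- image of the good part via the area formula
  have hder : ∀ x ∈ A, HasFDerivWithinAt h (0 : ℝ →L[ℝ] ℝ) A x := by
    intro x hx
    rw [hasFDerivWithinAt_iff_tendsto]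
    have hsplit : 𝓝[A] x ≤ 𝓝[A \ {x}] x ⊔ pure x := by
      rw [← nhdsWithin_singleton x, ← nhdsWithin_union]
      apply nhdsWithin_mono
      intro y hy
      by_cases hyx : y = x
      · right; simp [hyx]
      · left; exact ⟨hy, hyx⟩
    apply Tendsto.mono_left _ hsplit
    rw [tendsto_sup]
    constructor
    · -- within A \ {x}
      have hmono : 𝓝[A \ {x}] x ≤ 𝓝[K \ {x}] x :=
        nhdsWithin_mono x (diff_subset_diff_left diff_subset)
      have hP := (hAP x hx).mono_left hmono
      apply squeeze_zero' (g := fun y => (Cg:ℝ) * (dist (f (γ x)) (f (γ y)) / |x - y|))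
      · filter_upwards with y
        positivity
      · filter_upwards [self_mem_nhdsWithin] with y hy
        have hxy : |y - x| = |x - y| := abs_sub_comm _ _
        have hbd : ‖h y - h x - (0 : ℝ →L[ℝ] ℝ) (y - x)‖ ≤ (Cg:ℝ) * dist (f (γ x)) (f (γ y)) := by
          simp only [ContinuousLinearMap.zero_apply, sub_zero, Real.norm_eq_abs]
          have := hg.dist_le_mul (f (γ y)) (f (γ x))
          rw [Real.dist_eq] at this
          rw [show |h y - h x| = dist (g (f (γ y))) (g (f (γ x))) from by
            rw [Real.dist_eq]; rfl]
          rw [Real.dist_eq]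
          exact this.trans (by rw [dist_comm])
        calc ‖y - x‖⁻¹ * ‖h y - h x - (0 : ℝ →L[ℝ] ℝ) (y - x)‖
            ≤ ‖y - x‖⁻¹ * ((Cg:ℝ) * dist (f (γ x)) (f (γ y))) := by
              apply mul_le_mul_of_nonneg_left hbd (by positivity)
        _ = (Cg:ℝ) * (dist (f (γ x)) (f (γ y)) / |x - y|) := by
              rw [Real.norm_eq_abs, hxy]
              field_simp
      · have := hP.const_mul (Cg:ℝ)
        simpa using this
    · -- pure x
      rw [tendsto_pure_left]
      intro s hs
      have : ‖(x:ℝ) - x‖⁻¹ * ‖h x - h x - (0 : ℝ →L[ℝ] ℝ) (x - x)‖ = 0 := by simp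
      rw [this]
      exact mem_of_mem_nhds hs
  have him2 : volume (h '' A) = 0 := by
    have := addHaar_image_le_lintegral_abs_det_fderiv volume hAm hder
    simp only [ContinuousLinearMap.det] at this
    rw [show ((0 : ℝ →L[ℝ] ℝ) : ℝ →ₗ[ℝ] ℝ) = 0 from rfl, LinearMap.det_zero] at this
    simpa using this
  have hcover : h '' K ⊆ h '' A ∪ h '' (K \ A) := by
    rw [← image_union]
    apply image_mono
    intro x hx
    by_cases hxA : x ∈ A
    · exact Or.inl hxA
    · exact Or.inr ⟨hx, hxA⟩
  apply le_antisymm _ zero_le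
  calc volume (h '' K) ≤ volume (h '' A ∪ h '' (K \ A)) := measure_mono hcover
  _ ≤ volume (h '' A) + volume (h '' (K \ A)) := measure_union_le _ _
  _ = 0 := by rw [him1, him2, add_zero]

/-- `f` is curve-flat iff for every Lipschitz curve `γ : K → M` and every Lipschitz
`g : N → ℝ`, the set `(g ∘ f ∘ γ) '' K` is Lebesgue-null. -/
theorem curveFlat_iff_real_images_null {M N : Type*} [MetricSpace M] [MetricSpace N]
    (f : M → N) (Lf : NNReal) (hf : LipschitzWith Lf f) :
    CurveFlat f ↔ ∀ (K : Set ℝ), IsCompact K → ∀ (γ : ℝ → M) (C : NNReal),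
      LipschitzOnWith C γ K → ∀ (g : N → ℝ) (Cg : NNReal), LipschitzWith Cg g →
        volume ((g ∘ f ∘ γ) '' K) = 0 := by
  constructor
  · intro hcf K hK γ C hγ g Cg hg
    exact cf_forward f Lf hf hcf K hK γ C hγ g Cg hg
  · intro hyp
    exact cf_reverse f Lf hf hyp
end

section
/- Let M be a compact metric space with base point 0, f : M → N a base-point-preserving Lipschitz map into a purely 1-unrectifiable metric space P = N. Then f factors through the quotient M_lip: there exists a Lipschitz map g : M_lip → P with Lipschitz constant at most ‖f‖_L such that f = g ∘ π, where π : M → M_lip is the canonical quotient map. -/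
open MeasureTheory Filter Set Topology

/-- `h` is uniformly locally flat: `|h x - h y| / d(x,y) → 0` as `d(x,y) → 0`. -/
def UnifLocFlat {M : Type*} [MetricSpace M] (h : M → ℝ) : Prop :=
  ∀ ε > (0:ℝ), ∃ θ > (0:ℝ), ∀ x y : M, dist x y ≤ θ → |h x - h y| ≤ ε * dist x y

/-- The pseudometric `d_lip(x,y) = sup {|h x - h y| : h ∈ lip₀(M), ‖h‖_L ≤ 1}`. -/
noncomputable def dlip {M : Type*} [MetricSpace M] (base : M) (x y : M) : ℝ :=
  sSup {r : ℝ | ∃ h : M → ℝ, LipschitzWith 1 h ∧ h base = 0 ∧ UnifLocFlat h ∧ r = |h x - h y|}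

/-- Let `M` be a compact pointed metric space with metric quotient `(Q, π)` for the
pseudometric `d_lip`, and `f : M → P` a base-point-preserving Lipschitz map into a
purely 1-unrectifiable space `P` (satisfying the distance formula of Theorem A of
[AGPP]). Then `f` factors through `π` via a Lipschitz map of constant at most that
of `f`. -/
theorem factors_through_Mlip_of_p1u_target {M P Q : Type*}
    [MetricSpace M] [CompactSpace M] [MetricSpace P] [MetricSpace Q]
    (baseM : M) (baseP : P)
    (hP : PurelyOneUnrectifiable P)
    (f : M → P) (L : NNReal) (hf : LipschitzWith L f) (hf0 : f baseM = baseP)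
    (thmA : ∀ p q : P, dist p q =
      sSup {r : ℝ | ∃ φ : P → ℝ, LipschitzWith 1 φ ∧ φ baseP = 0 ∧ UnifLocFlat φ ∧
        r = φ p - φ q})
    (π : M → Q) (hsurj : Function.Surjective π)
    (hquot : ∀ x y : M, dist (π x) (π y) = dlip baseM x y) :
    ∃ g : Q → P, LipschitzWith L g ∧ f = g ∘ π := by
  have hbdd : ∀ x y : M, BddAbove {r : ℝ | ∃ h : M → ℝ, LipschitzWith 1 h ∧ h baseM = 0 ∧
      UnifLocFlat h ∧ r = |h x - h y|} := by
    intro x y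
    refine ⟨dist x y, ?_⟩
    rintro r ⟨h, h1, -, -, rfl⟩
    have := h1.dist_le_mul x y
    rwa [Real.dist_eq, NNReal.coe_one, one_mul] at this
  have dlip_nonneg : ∀ x y : M, 0 ≤ dlip baseM x y := by
    intro x y
    refine le_csSup (hbdd x y) ?_
    refine ⟨fun _ => 0, ?_, rfl, ?_, by simp⟩
    · exact (LipschitzWith.const 0).weaken (zero_le_one)
    · intro ε hε
      exact ⟨1, one_pos, fun a b _ => by
        simpa using mul_nonneg hε.le dist_nonneg⟩
  have key : ∀ x y : M, dist (f x) (f y) ≤ (L : ℝ) * dist (π x) (π y) := by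
    intro x y
    rw [hquot, thmA (f x) (f y)]
    refine Real.sSup_le ?_ (mul_nonneg L.coe_nonneg (dlip_nonneg x y))
    rintro r ⟨φ, hφ1, hφ0, hφflat, rfl⟩
    rcases eq_or_ne L 0 with hL | hL
    · have hfc := hf.dist_le_mul x y
      rw [hL] at hfc
      simp only [NNReal.coe_zero, zero_mul] at hfc
      have hfeq : f x = f y := dist_le_zero.mp hfc
      rw [hfeq]
      simpa using mul_nonneg L.coe_nonneg (dlip_nonneg x y)
    · have hLpos : (0:ℝ) < (L : ℝ) := by positivity
      set h : M → ℝ := fun m => (L : ℝ)⁻¹ * φ (f m) with hh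
      have hdist : ∀ a b : M, dist (h a) (h b) = (L:ℝ)⁻¹ * dist (φ (f a)) (φ (f b)) := by
        intro a b
        simp only [hh, Real.dist_eq, ← mul_sub, abs_mul, abs_inv, abs_of_pos hLpos]
      have h1 : LipschitzWith 1 h := by
        apply LipschitzWith.of_dist_le_mul
        intro a b
        rw [hdist]
        have h2 : dist (φ (f a)) (φ (f b)) ≤ (L:ℝ) * dist a b := by
          calc dist (φ (f a)) (φ (f b)) ≤ 1 * dist (f a) (f b) := hφ1.dist_le_mul _ _
            _ ≤ (L:ℝ) * dist a b := by rw [one_mul]; exact hf.dist_le_mul a b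
        calc (L:ℝ)⁻¹ * dist (φ (f a)) (φ (f b)) ≤ (L:ℝ)⁻¹ * ((L:ℝ) * dist a b) := by
              exact mul_le_mul_of_nonneg_left h2 (by positivity)
          _ = (1:NNReal) * dist a b := by field_simp; simp
      have h0 : h baseM = 0 := by simp [hh, hf0, hφ0]
      have hflat : UnifLocFlat h := by
        intro ε hε
        obtain ⟨θ, hθ, hθle⟩ := hφflat ε hε
        refine ⟨θ / (L:ℝ), by positivity, fun a b hab => ?_⟩
        have hfab : dist (f a) (f b) ≤ θ := by
          calc dist (f a) (f b) ≤ (L:ℝ) * dist a b := hf.dist_le_mul a b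
            _ ≤ (L:ℝ) * (θ / (L:ℝ)) := mul_le_mul_of_nonneg_left hab hLpos.le
            _ = θ := by field_simp
        have := hθle (f a) (f b) hfab
        have h3 : |h a - h b| = (L:ℝ)⁻¹ * |φ (f a) - φ (f b)| := by
          rw [← Real.dist_eq, ← Real.dist_eq, hdist]
        rw [h3]
        calc (L:ℝ)⁻¹ * |φ (f a) - φ (f b)| ≤ (L:ℝ)⁻¹ * (ε * dist (f a) (f b)) :=
              mul_le_mul_of_nonneg_left this (by positivity)
          _ ≤ (L:ℝ)⁻¹ * (ε * ((L:ℝ) * dist a b)) := by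
              refine mul_le_mul_of_nonneg_left (mul_le_mul_of_nonneg_left
                (hf.dist_le_mul a b) hε.le) (by positivity)
          _ = ε * dist a b := by field_simp
      have hmem : |h x - h y| ≤ dlip baseM x y :=
        le_csSup (hbdd x y) ⟨h, h1, h0, hflat, rfl⟩
      have hEq : |φ (f x) - φ (f y)| = (L:ℝ) * |h x - h y| := by
        rw [← Real.dist_eq, ← Real.dist_eq, hdist]
        field_simp
      calc φ (f x) - φ (f y) ≤ |φ (f x) - φ (f y)| := le_abs_self _
        _ = (L:ℝ) * |h x - h y| := hEq
        _ ≤ (L:ℝ) * dlip baseM x y := mul_le_mul_of_nonneg_left hmem L.coe_nonneg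
  refine ⟨f ∘ Function.surjInv hsurj, ?_, ?_⟩
  · apply LipschitzWith.of_dist_le_mul
    intro a b
    have := key (Function.surjInv hsurj a) (Function.surjInv hsurj b)
    rwa [Function.surjInv_eq hsurj a, Function.surjInv_eq hsurj b] at this
  · funext x
    have := key (Function.surjInv hsurj (π x)) x
    rw [Function.surjInv_eq hsurj (π x), dist_self, mul_zero] at this
    exact (dist_le_zero.mp this).symm
end
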